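/- arXiv:2111.04211 — 9 statements merged into one kernel-verified Lean document; each statement's English description precedes it below -/
import Mathlib

section
/- Let λ be a circular permutation of [n] (n ≥ 2). Form the linear permutation λ' of length n−1 by reading the entries of λ clockwise starting from the entry immediately after 1 and deleting the entry 1. Then λ avoids the vincular circular pattern 2̄3̄41 if and only if λ' (as a linear word on {2,…,n}) avoids both the vincular pattern 1̄2̄3 and the vincular pattern 41‾2‾3 (i.e., 41\overline{23}). -/
open List

/-- `w` is a linear permutation of `[n] = {1,…,n}` written in one-line notation. -/
def IsPermOf (n : ℕ) (w : List ℕ) : Prop :=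
  w.Perm ((List.range n).map (· + 1))

/-- occurrence of the vincular pattern 1̄2̄3 : positions a, a+1, c with c > a+1
forming an increasing triple. -/
def Occ123 (w : List ℕ) : Prop :=
  ∃ a c, a + 1 < c ∧ c < w.length ∧
    w.getD a 0 < w.getD (a + 1) 0 ∧ w.getD (a + 1) 0 < w.getD c 0

/-- occurrence of the vincular pattern 41\overline{23} : positions a < b < c (and c+1)
with w_b < w_c < w_{c+1} < w_a. -/
def Occ4123 (w : List ℕ) : Prop :=
  ∃ a b c, a < b ∧ b < c ∧ c + 1 < w.length ∧
    w.getD b 0 < w.getD c 0 ∧ w.getD c 0 < w.getD (c + 1) 0 ∧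
    w.getD (c + 1) 0 < w.getD a 0

/-- occurrence of the vincular pattern 1\overline{23} : positions a < b (and b+1)
forming an increasing triple. -/
def Occ1_23 (w : List ℕ) : Prop :=
  ∃ a b, a < b ∧ b + 1 < w.length ∧
    w.getD a 0 < w.getD b 0 ∧ w.getD b 0 < w.getD (b + 1) 0

/-- occurrence of the vincular pattern \overline{23}41 : positions a, a+1, c, d with
a+1 < c < d and w_d < w_a < w_{a+1} < w_c. -/
def Occ2341 (w : List ℕ) : Prop :=
  ∃ a c d, a + 1 < c ∧ c < d ∧ d < w.length ∧
    w.getD d 0 < w.getD a 0 ∧ w.getD a 0 < w.getD (a + 1) 0 ∧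
    w.getD (a + 1) 0 < w.getD c 0

/-- a circular permutation (represented by any linear reading `w`) avoids
\overline{23}41 iff no cyclic rotation of `w` contains it. -/
def CircAvoids2341 (w : List ℕ) : Prop := ∀ k, ¬ Occ2341 (w.rotate k)

/-- the set `L_n` of linear permutations of `[n]` avoiding both 1̄2̄3 and 41\overline{23}. -/
def Lset (n : ℕ) : Set (List ℕ) :=
  {w | IsPermOf n w ∧ ¬ Occ123 w ∧ ¬ Occ4123 w}

/-- the permutation (n−1)(n−2)⋯1 n. -/
def excludedPerm (n : ℕ) : List ℕ :=
  ((List.range (n - 1)).map (· + 1)).reverse ++ [n]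

/-- `L_n^* = L_n \ {(n−1)(n−2)⋯1n}`. -/
def Lstar (n : ℕ) : Set (List ℕ) := Lset n \ {excludedPerm n}

/-- `B_n`: members of `L_n^*` in which 1 occurs to the right of n. -/
def Bset (n : ℕ) : Set (List ℕ) :=
  {w ∈ Lstar n | w.idxOf n < w.idxOf 1}

/-- `C_n`: members of `L_n^*` in which 1 occurs to the left of n and 2 to its right. -/
def Cset (n : ℕ) : Set (List ℕ) :=
  {w ∈ Lstar n | w.idxOf 1 < w.idxOf n ∧ w.idxOf n < w.idxOf 2}

/-- members of `B_n` ending in the two letters i, j. -/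
def Bnij (n i j : ℕ) : Set (List ℕ) :=
  {w ∈ Bset n | ∃ u, w = u ++ [i, j]}

/-- members of `C_n` ending in the two letters i, j. -/
def Cnij (n i j : ℕ) : Set (List ℕ) :=
  {w ∈ Cset n | ∃ u, w = u ++ [i, j]}

noncomputable def bcount (n i j : ℕ) : ℕ := (Bnij n i j).ncard
noncomputable def ccount (n i j : ℕ) : ℕ := (Cnij n i j).ncard

/-- `b(n,j)`: the number of members of `B_n` ending in the letter j. -/
noncomputable def bLast (n j : ℕ) : ℕ := Set.ncard {w ∈ Bset n | ∃ u, w = u ++ [j]}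

/-- `c(n,j)`: the number of members of `C_n` ending in the letter j. -/
noncomputable def cLast (n j : ℕ) : ℕ := Set.ncard {w ∈ Cset n | ∃ u, w = u ++ [j]}

/-- `V_n`: linear permutations of `[n]` avoiding both 1̄2̄3 and 1\overline{23}. -/
def Vset (n : ℕ) : Set (List ℕ) :=
  {w | IsPermOf n w ∧ ¬ Occ123 w ∧ ¬ Occ1_23 w}

/-- `v(n,j)`: the number of members of `V_n` ending in the letter j. -/
noncomputable def vcount (n j : ℕ) : ℕ := Set.ncard {w ∈ Vset n | ∃ u, w = u ++ [j]}


private lemma mymod (L x r : ℕ) (hr : r < L) (h : x = r ∨ x = L + r) : x % L = r := by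
  rcases h with h | h <;> subst h
  · exact Nat.mod_eq_of_lt hr
  · rw [Nat.add_mod_left]; exact Nat.mod_eq_of_lt hr

private lemma getD_rotate (l : List ℕ) (k i : ℕ) (h : i < l.length) :
    (l.rotate k).getD i 0 = l.getD ((i + k) % l.length) 0 := by
  have hl : 0 < l.length := lt_of_le_of_lt (Nat.zero_le i) h
  have h1 : i < (l.rotate k).length := by simpa using h
  rw [List.getD_eq_getElem _ _ h1, List.getD_eq_getElem _ _ (Nat.mod_lt _ hl),
    List.getElem_rotate]

private lemma rotD (t : List ℕ) (k i j : ℕ) (h1 : i < t.length + 1)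
    (h2 : (i + k) % (t.length + 1) = j + 1) :
    ((1 :: t).rotate k).getD i 0 = t.getD j 0 := by
  have h := getD_rotate (1 :: t) k i (by simpa using h1)
  simp only [List.length_cons] at h
  rw [h, h2, List.getD_cons_succ]

private lemma rotD1 (t : List ℕ) (k i : ℕ) (h1 : i < t.length + 1)
    (h2 : (i + k) % (t.length + 1) = 0) :
    ((1 :: t).rotate k).getD i 0 = 1 := by
  have h := getD_rotate (1 :: t) k i (by simpa using h1)
  simp only [List.length_cons] at h
  rw [h, h2, List.getD_cons_zero]

private lemma main_iff (t : List ℕ) (ht : ∀ x ∈ t, 1 < x) :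
    (∀ k, ¬ Occ2341 ((1 :: t).rotate k)) ↔ ¬ Occ123 t ∧ ¬ Occ4123 t := by
  have htD : ∀ j, j < t.length → 1 < t.getD j 0 := by
    intro j hj
    rw [List.getD_eq_getElem _ _ hj]
    exact ht _ (List.getElem_mem hj)
  constructor
  · intro h
    constructor
    · rintro ⟨a, c, hac, hcl, hv1, hv2⟩
      refine h (a + 1) ⟨0, c - a, t.length - a, by omega, by omega, ?_, ?_, ?_, ?_⟩
      · rw [List.length_rotate, List.length_cons]; omega
      · rw [rotD1 t (a+1) (t.length - a) (by omega) (mymod _ _ _ (by omega) (by omega)),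
          rotD t (a+1) 0 a (by omega) (mymod _ _ _ (by omega) (by omega))]
        exact htD a (by omega)
      · rw [rotD t (a+1) 0 a (by omega) (mymod _ _ _ (by omega) (by omega)),
          rotD t (a+1) 1 (a+1) (by omega) (mymod _ _ _ (by omega) (by omega))]
        exact hv1
      · rw [rotD t (a+1) 1 (a+1) (by omega) (mymod _ _ _ (by omega) (by omega)),
          rotD t (a+1) (c - a) c (by omega) (mymod _ _ _ (by omega) (by omega))]
        exact hv2
    · rintro ⟨a, b, c, hab, hbc, hcl, w1, w2, w3⟩
      refine h (c + 1) ⟨0, t.length + 1 - (c - a), t.length + 1 - (c - b),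
        by omega, by omega, ?_, ?_, ?_, ?_⟩
      · rw [List.length_rotate, List.length_cons]; omega
      · rw [rotD t (c+1) (t.length + 1 - (c - b)) b (by omega)
            (mymod _ _ _ (by omega) (by omega)),
          rotD t (c+1) 0 c (by omega) (mymod _ _ _ (by omega) (by omega))]
        exact w1
      · rw [rotD t (c+1) 0 c (by omega) (mymod _ _ _ (by omega) (by omega)),
          rotD t (c+1) 1 (c+1) (by omega) (mymod _ _ _ (by omega) (by omega))]
        exact w2
      · rw [rotD t (c+1) 1 (c+1) (by omega) (mymod _ _ _ (by omega) (by omega)),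
          rotD t (c+1) (t.length + 1 - (c - a)) a (by omega)
            (mymod _ _ _ (by omega) (by omega))]
        exact w3
  · rintro ⟨h123, h4123⟩ k hk
    rw [← List.rotate_mod] at hk
    simp only [List.length_cons] at hk
    set m := k % (t.length + 1) with hmdef
    have hmlt : m < t.length + 1 := by
      rw [hmdef]; exact Nat.mod_lt _ (by omega)
    obtain ⟨a, c, d, hac, hcd, hdl, v1, v2, v3⟩ := hk
    rw [List.length_rotate, List.length_cons] at hdl
    have hVge : ∀ i, i < t.length + 1 → 1 ≤ ((1 :: t).rotate m).getD i 0 := by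
      intro i hi
      have h := getD_rotate (1 :: t) m i (by simpa using hi)
      simp only [List.length_cons] at h
      rw [h]
      rcases Nat.eq_zero_or_pos ((i + m) % (t.length + 1)) with h0 | h0
      · rw [h0, List.getD_cons_zero]
      · obtain ⟨j, hj⟩ : ∃ j, (i + m) % (t.length + 1) = j + 1 :=
          ⟨_, (Nat.succ_pred_eq_of_pos h0).symm⟩
        rw [hj, List.getD_cons_succ]
        have hjl : j < t.length := by
          have hh := Nat.mod_lt (i + m) (y := t.length + 1) (by omega)
          omega
        exact le_of_lt (htD j hjl)
    by_cases hcc : c + m < t.length + 1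
    · -- no wrap before c : pattern 123 in t
      have ha0 : 1 ≤ a + m := by
        by_contra h0
        have e1 : ((1 :: t).rotate m).getD a 0 = 1 :=
          rotD1 t m a (by omega) (by rw [Nat.mod_eq_of_lt (by omega)]; omega)
        have e2 := hVge d (by omega)
        omega
      have Ea : ((1 :: t).rotate m).getD a 0 = t.getD (a + m - 1) 0 :=
        rotD t m a (a + m - 1) (by omega) (mymod _ _ _ (by omega) (by omega))
      have Ea1 : ((1 :: t).rotate m).getD (a + 1) 0 = t.getD (a + m) 0 :=
        rotD t m (a + 1) (a + m) (by omega) (mymod _ _ _ (by omega) (by omega))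
      have Ec : ((1 :: t).rotate m).getD c 0 = t.getD (c + m - 1) 0 :=
        rotD t m c (c + m - 1) (by omega) (mymod _ _ _ (by omega) (by omega))
      rw [Ea, Ea1] at v2
      rw [Ea1, Ec] at v3
      refine h123 ⟨a + m - 1, c + m - 1, by omega, by omega, ?_, ?_⟩
      · rw [show a + m - 1 + 1 = a + m from by omega]; exact v2
      · rw [show a + m - 1 + 1 = a + m from by omega]; exact v3
    · by_cases ha1 : a + 1 + m < t.length + 1
      · -- wrap strictly between a+1 and c : pattern 4123 in t
        have hcm : t.length + 1 < c + m := by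
          rcases Nat.lt_or_ge (t.length + 1) (c + m) with h' | h'
          · exact h'
          · exfalso
            have hce : c + m = t.length + 1 := by omega
            have e1 : ((1 :: t).rotate m).getD c 0 = 1 :=
              rotD1 t m c (by omega) (mymod _ _ _ (by omega) (by omega))
            have e2 := hVge (a + 1) (by omega)
            omega
        have ha0 : 1 ≤ a + m := by
          by_contra h0
          have e1 : ((1 :: t).rotate m).getD a 0 = 1 :=
            rotD1 t m a (by omega) (by rw [Nat.mod_eq_of_lt (by omega)]; omega)
          have e2 := hVge d (by omega)
          omega
        have Ea : ((1 :: t).rotate m).getD a 0 = t.getD (a + m - 1) 0 :=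
          rotD t m a (a + m - 1) (by omega) (mymod _ _ _ (by omega) (by omega))
        have Ea1 : ((1 :: t).rotate m).getD (a + 1) 0 = t.getD (a + m) 0 :=
          rotD t m (a + 1) (a + m) (by omega) (mymod _ _ _ (by omega) (by omega))
        have Ec : ((1 :: t).rotate m).getD c 0 = t.getD (c + m - (t.length + 1) - 1) 0 :=
          rotD t m c (c + m - (t.length + 1) - 1) (by omega)
            (mymod _ _ _ (by omega) (by omega))
        have Ed : ((1 :: t).rotate m).getD d 0 = t.getD (d + m - (t.length + 1) - 1) 0 :=
          rotD t m d (d + m - (t.length + 1) - 1) (by omega)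
            (mymod _ _ _ (by omega) (by omega))
        rw [Ed, Ea] at v1
        rw [Ea, Ea1] at v2
        rw [Ea1, Ec] at v3
        refine h4123 ⟨c + m - (t.length + 1) - 1, d + m - (t.length + 1) - 1, a + m - 1,
          by omega, by omega, by omega, ?_, ?_, ?_⟩
        · exact v1
        · rw [show a + m - 1 + 1 = a + m from by omega]; exact v2
        · rw [show a + m - 1 + 1 = a + m from by omega]; exact v3
      · by_cases ha : t.length + 1 ≤ a + m
        · -- everything wraps : pattern 123 in t
          have ha0 : t.length + 1 + 1 ≤ a + m := by
            rcases Nat.lt_or_ge (t.length + 1) (a + m) with h' | h'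
            · omega
            · exfalso
              have hae : a + m = t.length + 1 := by omega
              have e1 : ((1 :: t).rotate m).getD a 0 = 1 :=
                rotD1 t m a (by omega) (mymod _ _ _ (by omega) (by omega))
              have e2 := hVge d (by omega)
              omega
          have Ea : ((1 :: t).rotate m).getD a 0 = t.getD (a + m - (t.length + 1) - 1) 0 :=
            rotD t m a (a + m - (t.length + 1) - 1) (by omega)
              (mymod _ _ _ (by omega) (by omega))
          have Ea1 : ((1 :: t).rotate m).getD (a + 1) 0 = t.getD (a + m - (t.length + 1)) 0 :=
            rotD t m (a + 1) (a + m - (t.length + 1)) (by omega)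
              (mymod _ _ _ (by omega) (by omega))
          have Ec : ((1 :: t).rotate m).getD c 0 = t.getD (c + m - (t.length + 1) - 1) 0 :=
            rotD t m c (c + m - (t.length + 1) - 1) (by omega)
              (mymod _ _ _ (by omega) (by omega))
          rw [Ea, Ea1] at v2
          rw [Ea1, Ec] at v3
          refine h123 ⟨a + m - (t.length + 1) - 1, c + m - (t.length + 1) - 1,
            by omega, by omega, ?_, ?_⟩
          · rw [show a + m - (t.length + 1) - 1 + 1 = a + m - (t.length + 1) from by omega]
            exact v2
          · rw [show a + m - (t.length + 1) - 1 + 1 = a + m - (t.length + 1) from by omega]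
            exact v3
        · -- wrap exactly at a+1 : contradiction
          have hae : a + 1 + m = t.length + 1 := by omega
          have e1 : ((1 :: t).rotate m).getD (a + 1) 0 = 1 :=
            rotD1 t m (a + 1) (by omega) (mymod _ _ _ (by omega) (by omega))
          have e2 := hVge a (by omega)
          have e3 := hVge d (by omega)
          omega

theorem stmt0 (n : ℕ) (hn : 2 ≤ n) (w : List ℕ) (hw : IsPermOf n w) :
    CircAvoids2341 w ↔
      ¬ Occ123 ((w.rotate (w.idxOf 1)).tail) ∧
      ¬ Occ4123 ((w.rotate (w.idxOf 1)).tail) := by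
  have hlen : w.length = n := by
    have h := hw.length_eq
    simpa using h
  have h1w : (1 : ℕ) ∈ w := by
    rw [hw.mem_iff]
    simp only [List.mem_map, List.mem_range]
    exact ⟨0, by omega, rfl⟩
  have hidx : List.idxOf 1 w < w.length := List.idxOf_lt_length_iff.mpr h1w
  rcases hr : w.rotate (w.idxOf 1) with _ | ⟨x, tl⟩
  · exfalso
    have h := congrArg List.length hr
    rw [List.length_rotate] at h
    simp only [List.length_nil] at h
    omega
  have h0 : x = 1 := by
    have h := getD_rotate w (w.idxOf 1) 0 (by omega)
    rw [hr, List.getD_cons_zero, Nat.zero_add, Nat.mod_eq_of_lt hidx,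
      List.getD_eq_getElem _ _ hidx, List.getElem_idxOf hidx] at h
    exact h
  subst h0
  have hndw : w.Nodup := hw.nodup_iff.2
    (List.Nodup.map (fun a b h => by omega) List.nodup_range)
  have htl : ∀ y ∈ tl, 1 < y := by
    intro y hy
    have hyw : y ∈ w := by
      have hmem : y ∈ w.rotate (w.idxOf 1) := by
        rw [hr]; exact List.mem_cons_of_mem _ hy
      exact (List.rotate_perm w _).mem_iff.1 hmem
    have hy1 : 1 ≤ y := by
      have h := hw.mem_iff.1 hyw
      simp only [List.mem_map, List.mem_range] at h
      omega
    have hne : y ≠ 1 := by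
      intro he
      subst he
      have hnd : (w.rotate (w.idxOf 1)).Nodup := (List.rotate_perm w _).nodup_iff.2 hndw
      rw [hr] at hnd
      exact (List.nodup_cons.1 hnd).1 hy
    omega
  have hiff : CircAvoids2341 w ↔ ∀ k, ¬ Occ2341 (((1 : ℕ) :: tl).rotate k) := by
    constructor
    · intro h k
      rw [← hr, List.rotate_rotate]
      exact h _
    · intro h j hocc
      have he : ((1 : ℕ) :: tl).rotate (w.length - w.idxOf 1 + j) = w.rotate j := by
        rw [← hr, List.rotate_rotate,
          show w.idxOf 1 + (w.length - w.idxOf 1 + j) = w.length + j from by omega,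
          ← List.rotate_mod w (w.length + j), Nat.add_mod_left, List.rotate_mod]
      exact h _ (he ▸ hocc)
  rw [List.tail_cons, hiff]
  exact main_iff tl htl
end

section
/- For n ≥ 2 and 1 ≤ j ≤ n−1, the number b(n,n,j) of permutations in B_n ending in the two letters n, j equals 1 if j = 1 and equals 0 otherwise; moreover the unique such permutation when j = 1 is (n−1)(n−2)⋯2 n 1. -/
open List

section auxstmt2

open List

private lemma revmap_eq (m : ℕ) :
    ((List.range m).map (· + 2)).reverse = (List.range m).map (fun i => m + 1 - i) := by
  induction m with
  | zero => simp
  | succ m ih =>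
    conv_lhs => rw [List.range_succ, List.map_append, List.reverse_append, ih]
    conv_rhs => rw [List.range_succ_eq_map, List.map_cons, List.map_map]
    simp only [List.map_cons, List.map_nil, List.reverse_cons, List.reverse_nil,
      List.nil_append, List.singleton_append, Nat.sub_zero]
    congr 1
    apply List.map_congr_left
    intro i hi
    simp only [Function.comp_apply, Nat.succ_eq_add_one]
    have := List.mem_range.mp hi
    omega

private lemma getD_RD (n : ℕ) (hn : 2 ≤ n) (i : ℕ) :
    ((((List.range (n - 2)).map (· + 2)).reverse ++ [n, 1]).getD i 0) =
      if i < n - 2 then n - 1 - i else if i = n - 2 then n else if i = n - 2 + 1 then 1 else 0 := by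
  have hlen : (((List.range (n - 2)).map (· + 2)).reverse).length = n - 2 := by simp
  by_cases h1 : i < n - 2
  · rw [List.getD_append _ _ _ _ (by omega), if_pos h1, revmap_eq]
    rw [List.getD_eq_getElem _ _ (by simp [h1]), List.getElem_map, List.getElem_range]
    omega
  · rw [if_neg h1]
    have hD : ∀ k, ((((List.range (n - 2)).map (· + 2)).reverse ++ [n, 1]).getD ((n-2) + k) 0)
        = ([n, 1].getD k 0) := by
      intro k
      rw [List.getD_eq_getElem?_getD, List.getElem?_append, if_neg (by omega)]
      rw [hlen, Nat.add_sub_cancel_left, ← List.getD_eq_getElem?_getD]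
    by_cases h2 : i = n - 2
    · rw [if_pos h2, h2]
      have := hD 0
      simpa using this
    · rw [if_neg h2]
      by_cases h3 : i = n - 2 + 1
      · rw [if_pos h3, h3]
        have := hD 1
        simpa using this
      · rw [if_neg h3]
        rw [List.getD_eq_getElem?_getD, List.getElem?_eq_none (by simp; omega)]
        simp

private lemma Dperm (n : ℕ) (hn : 2 ≤ n) :
    (((List.range (n - 2)).map (· + 2)).reverse ++ [n, 1]).Perm
      ((List.range n).map (· + 1)) := by
  set M := (List.range (n - 2)).map (· + 2) with hM
  have htarget : (List.range n).map (· + 1) = 1 :: (M ++ [n]) := by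
    obtain ⟨m, rfl⟩ : ∃ m, n = m + 2 := ⟨n - 2, by omega⟩
    rw [show m + 2 = (m + 1) + 1 from rfl, List.range_succ, List.map_append]
    rw [List.range_succ_eq_map, List.map_cons, List.map_map]
    simp only [hM, Nat.add_sub_cancel]
    congr 1
  have h1 : (M.reverse ++ [n, 1]).Perm (M ++ [n, 1]) := (List.reverse_perm M).append_right _
  have h2 : M ++ [n, 1] = (M ++ [n]) ++ [1] := by simp
  have h3 : ((M ++ [n]) ++ [1]).Perm (1 :: (M ++ [n])) := List.perm_append_singleton _ _
  rw [htarget]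
  exact h1.trans (h2 ▸ h3)

end auxstmt2

section aux2

private lemma Dlen (n : ℕ) :
    (((List.range (n - 2)).map (· + 2)).reverse ++ [n, 1]).length = (n - 2) + 2 := by simp

set_option maxHeartbeats 800000 in
private lemma Dno123 (n : ℕ) (hn : 2 ≤ n) :
    ¬ Occ123 (((List.range (n - 2)).map (· + 2)).reverse ++ [n, 1]) := by
  rintro ⟨a, c, hac, hc, h1, h2⟩
  rw [Dlen] at hc
  rw [getD_RD n hn a, getD_RD n hn (a+1), getD_RD n hn c] at *
  split_ifs at h1 h2 <;> omega

set_option maxHeartbeats 1600000 in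
private lemma Dno4123 (n : ℕ) (hn : 2 ≤ n) :
    ¬ Occ4123 (((List.range (n - 2)).map (· + 2)).reverse ++ [n, 1]) := by
  rintro ⟨a, b, c, hab, hbc, hc, h1, h2, h3⟩
  rw [Dlen] at hc
  rw [getD_RD n hn a, getD_RD n hn b, getD_RD n hn c, getD_RD n hn (c+1)] at *
  split_ifs at h1 h2 h3 <;> omega

end aux2

section aux3

private lemma getD_concat2_left (u : List ℕ) (x y : ℕ) (i : ℕ) (h : i < u.length) :
    (u ++ [x, y]).getD i 0 = u.getD i 0 :=
  List.getD_append _ _ _ _ h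

private lemma getD_concat2_fst (u : List ℕ) (x y : ℕ) :
    (u ++ [x, y]).getD u.length 0 = x := by
  rw [List.getD_eq_getElem?_getD, List.getElem?_append, if_neg (by omega)]
  simp

private lemma target_nodup (n : ℕ) : ((List.range n).map (· + 1)).Nodup :=
  (List.nodup_range (n := n)).map (fun a b h => by omega)

private lemma one_mem_target (n : ℕ) (hn : 2 ≤ n) : 1 ∈ (List.range n).map (· + 1) :=
  List.mem_map.mpr ⟨0, List.mem_range.mpr (by omega), rfl⟩

private lemma Bnn1 (n : ℕ) (hn : 2 ≤ n) :
    Bnij n n 1 = {((List.range (n - 2)).map (· + 2)).reverse ++ [n, 1]} := by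
  set R := ((List.range (n - 2)).map (· + 2)).reverse with hR
  have hRlen : R.length = n - 2 := by simp [hR]
  have hRmem : ∀ x ∈ R, 2 ≤ x ∧ x ≤ n - 1 := by
    intro x hx
    rw [hR, List.mem_reverse, List.mem_map] at hx
    obtain ⟨i, hi, rfl⟩ := hx
    have := List.mem_range.mp hi
    omega
  have hnR : n ∉ R := fun h => by have := hRmem n h; omega
  have h1R : (1:ℕ) ∉ R := fun h => by have := hRmem 1 h; omega
  apply Set.eq_singleton_iff_unique_mem.mpr
  constructor
  · refine ⟨⟨⟨⟨Dperm n hn, Dno123 n hn, Dno4123 n hn⟩, ?_⟩, ?_⟩, R, rfl⟩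
    · intro h
      simp only [Set.mem_singleton_iff] at h
      have h2 := congrArg List.getLast? h
      rw [show R ++ [n,1] = (R ++ [n]) ++ [1] by simp, List.getLast?_concat,
        excludedPerm, List.getLast?_concat, Option.some.injEq] at h2
      omega
    · show List.idxOf n (R ++ [n, 1]) < List.idxOf 1 (R ++ [n, 1])
      rw [List.idxOf_append_of_notMem hnR, List.idxOf_append_of_notMem h1R,
        List.idxOf_cons_self, List.idxOf_cons_ne _ (show n ≠ 1 by omega),
        List.idxOf_cons_self]
      omega
  · rintro w ⟨⟨⟨⟨hperm, h123, _⟩, _⟩, _⟩, u, rfl⟩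
    suffices hu : u = R by rw [hu]
    have huR : u.Perm R :=
      (List.perm_append_right_iff [n, 1]).mp (hperm.trans (Dperm n hn).symm)
    have hwnodup : (u ++ [n, 1]).Nodup := hperm.nodup_iff.mpr (target_nodup n)
    have hunodup : u.Nodup := (List.sublist_append_left u [n, 1]).nodup hwnodup
    have hchain : List.IsChain (· > ·) u := by
      rw [List.isChain_iff_getElem]
      intro i hi
      by_contra hle
      push_neg at hle
      rcases lt_or_eq_of_le hle with hlt | heq
      · -- strict ascent → Occ123
        apply h123
        refine ⟨i, u.length, by omega, by simp, ?_, ?_⟩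
        · rw [getD_concat2_left u n 1 i (by omega), getD_concat2_left u n 1 (i+1) (by omega),
            List.getD_eq_getElem _ _ (by omega), List.getD_eq_getElem _ _ (by omega)]
          exact hlt
        · rw [getD_concat2_left u n 1 (i+1) (by omega), getD_concat2_fst u n 1,
            List.getD_eq_getElem _ _ (by omega)]
          have hmem : u[i+1] ∈ u ++ [n, 1] :=
            List.mem_append_left _ (List.getElem_mem _)
          have hmem' : u[i+1] ∈ (List.range n).map (· + 1) := hperm.mem_iff.mp hmem
          obtain ⟨k, hk, hke⟩ := List.mem_map.mp hmem'
          have := List.mem_range.mp hk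
          have hne : u[i+1] ≠ n := by
            intro hcontra
            have : n ∈ u := hcontra ▸ List.getElem_mem _
            have h2 := List.nodup_append.mp hwnodup
            exact h2.2.2 n this n (by simp) rfl
          omega
      · have := hunodup.get_inj_iff.mp heq.symm
        simp only [Fin.mk.injEq] at this
        omega
    have hRsort : List.Pairwise (· > ·) R := by
      rw [hR, revmap_eq, List.pairwise_iff_get]
      intro i j hij
      have hi := i.isLt
      have hj := j.isLt
      simp only [List.length_map, List.length_range] at hi hj
      simp only [List.get_eq_getElem, List.getElem_map, List.getElem_range]
      have hij' : (i : ℕ) < (j : ℕ) := hij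
      omega
    haveI : IsAntisymm ℕ (· > ·) := ⟨fun a b h1 h2 => absurd h1 (not_lt.2 h2.le)⟩
    haveI : IsTrans ℕ (· > ·) := ⟨fun a b c h1 h2 => lt_trans h2 h1⟩
    exact huR.eq_of_pairwise' (List.isChain_iff_pairwise.mp hchain) hRsort

end aux3

theorem stmt2 (n j : ℕ) (hn : 2 ≤ n) (hj1 : 1 ≤ j) (hj : j ≤ n - 1) :
    bcount n n j = (if j = 1 then 1 else 0) ∧
    Bnij n n 1 = {((List.range (n - 2)).map (· + 2)).reverse ++ [n, 1]} := by
  have hmain := Bnn1 n hn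
  refine ⟨?_, hmain⟩
  by_cases hj' : j = 1
  · subst hj'
    rw [if_pos rfl, bcount, hmain, Set.ncard_singleton]
  · rw [if_neg hj', bcount]
    have hempty : Bnij n n j = ∅ := by
      rw [Set.eq_empty_iff_forall_notMem]
      rintro w ⟨⟨⟨⟨hperm, _, _⟩, _⟩, hidx⟩, u, rfl⟩
      have hwnodup : (u ++ [n, j]).Nodup := hperm.nodup_iff.mpr (target_nodup n)
      have h1w : (1:ℕ) ∈ u ++ [n, j] := hperm.mem_iff.mpr (one_mem_target n hn)
      have h1u : (1:ℕ) ∈ u := by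
        rcases List.mem_append.mp h1w with h | h
        · exact h
        · simp only [List.mem_cons, List.not_mem_nil, or_false] at h
          omega
      have hnu : n ∉ u := by
        intro h
        have h2 := List.nodup_append.mp hwnodup
        exact h2.2.2 n h n (by simp) rfl
      have hidxn : List.idxOf n (u ++ [n, j]) = u.length := by
        rw [List.idxOf_append_of_notMem hnu, List.idxOf_cons_self]
        omega
      have hidx1 : List.idxOf 1 (u ++ [n, j]) < u.length := by
        rw [List.idxOf_append_of_mem h1u]
        exact List.idxOf_lt_length_iff.mpr h1u
      have : List.idxOf n (u ++ [n, j]) < List.idxOf 1 (u ++ [n, j]) := hidx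
      omega
    rw [hempty, Set.ncard_empty]
end

section
/- For n ≥ 4 and 2 ≤ i < j ≤ n−1, we have b(n,i,j) = 0; that is, no permutation in B_n can end with an ascent i, j where 2 ≤ i < j ≤ n−1. -/
open List

theorem stmt3 (n i j : ℕ) (hn : 4 ≤ n) (hi : 2 ≤ i) (hij : i < j) (hj : j ≤ n - 1) :
    bcount n i j = 0 := by
  have hempty : Bnij n i j = ∅ := by
    ext w
    simp only [Bnij, Bset, Lstar, Lset, Set.mem_setOf_eq, Set.mem_diff,
      Set.mem_empty_iff_false, iff_false, not_exists]
    rintro ⟨⟨⟨⟨hperm, h123, h4123⟩, hexc⟩, hord⟩, u, rfl⟩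
    set w : List ℕ := u ++ [i, j] with hw
    have hmem : ∀ a : ℕ, 1 ≤ a → a ≤ n → a ∈ w := by
      intro a h1 h2
      rw [hperm.mem_iff]
      simp only [List.mem_map, List.mem_range]
      exact ⟨a - 1, by omega, by omega⟩
    have h1w : (1 : ℕ) ∈ w := hmem 1 le_rfl (by omega)
    have hnw : n ∈ w := hmem n (by omega) le_rfl
    have h1u : (1 : ℕ) ∈ u := by
      rcases List.mem_append.mp h1w with h | h
      · exact h
      · rw [List.mem_pair] at h
        rcases h with h | h <;> omega
    have hnu : n ∈ u := by
      rcases List.mem_append.mp hnw with h | h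
      · exact h
      · rw [List.mem_pair] at h
        rcases h with h | h <;> omega
    apply h4123
    refine ⟨w.idxOf n, w.idxOf 1, u.length, hord, ?_, ?_, ?_, ?_, ?_⟩
    · rw [hw, List.idxOf_append_of_mem h1u]
      exact List.idxOf_lt_length_iff.mpr h1u
    · simp [hw]
    · have hlt : w.idxOf 1 < w.length := List.idxOf_lt_length_iff.mpr h1w
      rw [List.getD_eq_getElem _ _ hlt, List.getElem_idxOf hlt]
      have : w.getD u.length 0 = i := by
        rw [hw]
        simp [List.getD_eq_getElem?_getD, List.getElem?_append_right (le_refl u.length)]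
      rw [this]; omega
    · have h1 : w.getD u.length 0 = i := by
        rw [hw]
        simp [List.getD_eq_getElem?_getD, List.getElem?_append_right (le_refl u.length)]
      have h2 : w.getD (u.length + 1) 0 = j := by
        rw [hw]
        simp [List.getD_eq_getElem?_getD,
          List.getElem?_append_right (Nat.le_add_right u.length 1)]
      rw [h1, h2]; exact hij
    · have h2 : w.getD (u.length + 1) 0 = j := by
        rw [hw]
        simp [List.getD_eq_getElem?_getD,
          List.getElem?_append_right (Nat.le_add_right u.length 1)]
      have hlt : w.idxOf n < w.length := List.idxOf_lt_length_iff.mpr hnw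
      rw [h2, List.getD_eq_getElem _ _ hlt, List.getElem_idxOf hlt]
      omega
  rw [bcount, hempty, Set.ncard_empty]
end

section
/- For n ≥ 4 and 2 ≤ j < i ≤ n−1, the map that deletes the final letter j from a permutation (and standardizes, i.e., decreases by 1 every letter greater than j) is a bijection from B_{n,i,j} onto B_{n−1,i−1} = ⋃_{k≠i−1} B_{n−1,k,i−1}; consequently b(n,i,j) = b(n−1,i−1) := Σ_{k≠i−1} b(n−1,k,i−1). -/
open List

/-- deletion of the final letter followed by standardization at level `j`. -/
def delStd (j : ℕ) (w : List ℕ) : List ℕ :=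
  w.dropLast.map (fun x => if j < x then x - 1 else x)

open List

namespace Stmt4Aux

def fm (j x : ℕ) : ℕ := if j < x then x - 1 else x
def gm (j x : ℕ) : ℕ := if x < j then x else x + 1

lemma gm_strictMono (j : ℕ) : StrictMono (gm j) := by
  intro x y h; unfold gm; split_ifs <;> omega

lemma fm_gm (j x : ℕ) : fm j (gm j x) = x := by
  unfold fm gm; split_ifs <;> omega

lemma gm_fm (j x : ℕ) (h : x ≠ j) : gm j (fm j x) = x := by
  unfold fm gm; split_ifs <;> omega

lemma gm_ne (j x : ℕ) : gm j x ≠ j := by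
  unfold gm; split_ifs <;> omega

lemma fm_lt_fm {j x y : ℕ} (h : fm j x < fm j y) : x < y := by
  unfold fm at h; split_ifs at h <;> omega

lemma gm_lt_gm {j x y : ℕ} (h : gm j x < gm j y) : x < y :=
  (gm_strictMono j).lt_iff_lt.mp h

lemma gm_ge (j x : ℕ) : x ≤ gm j x := by unfold gm; split_ifs <;> omega

lemma mem_of_permOf {n : ℕ} {w : List ℕ} (h : IsPermOf n w) {x : ℕ} :
    x ∈ w ↔ 1 ≤ x ∧ x ≤ n := by
  rw [h.mem_iff]
  simp only [List.mem_map, List.mem_range]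
  constructor
  · rintro ⟨y, hy, rfl⟩; omega
  · rintro ⟨h1, h2⟩; exact ⟨x - 1, by omega, by omega⟩

lemma nodup_range_map (n : ℕ) : ((List.range n).map (· + 1)).Nodup :=
  List.nodup_range.map (fun a b h => by omega)

lemma nodup_of_permOf {n : ℕ} {w : List ℕ} (h : IsPermOf n w) : w.Nodup :=
  h.nodup_iff.mpr (nodup_range_map n)

lemma length_of_permOf {n : ℕ} {w : List ℕ} (h : IsPermOf n w) : w.length = n := by
  rw [h.length_eq]; simp

lemma getD_map (f : ℕ → ℕ) (l : List ℕ) {p : ℕ} (hp : p < l.length) :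
    (l.map f).getD p 0 = f (l.getD p 0) := by
  rw [List.getD_eq_getElem _ _ (by simpa using hp), List.getD_eq_getElem _ _ hp,
    List.getElem_map]

lemma getD_append_left (u t : List ℕ) {p : ℕ} (hp : p < u.length) :
    (u ++ t).getD p 0 = u.getD p 0 := by
  rw [List.getD_eq_getElem _ _ (by simp; omega), List.getD_eq_getElem _ _ hp,
    List.getElem_append_left]

lemma getD_concat (u : List ℕ) (x : ℕ) : (u ++ [x]).getD u.length 0 = x := by
  rw [List.getD_eq_getElem _ _ (by simp)]
  exact List.getElem_concat_length rfl _

lemma indexOf_map (f : ℕ → ℕ) (l : List ℕ) (x : ℕ)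
    (h : ∀ y ∈ l, f y = f x → y = x) :
    (l.map f).idxOf (f x) = l.idxOf x := by
  induction l with
  | nil => rfl
  | cons a t ih =>
    simp only [List.map_cons]
    by_cases hax : a = x
    · subst hax; simp
    · have hfa : f a ≠ f x := fun hh => hax (h a (by simp) hh)
      rw [List.idxOf_cons_ne _ hfa, List.idxOf_cons_ne _ hax,
        ih (fun y hy hh => h y (by simp [hy]) hh)]

lemma perm_lift {n j : ℕ} (hj : 1 ≤ j) (hjn : j + 1 ≤ n) :
    ((((List.range (n - 1)).map (· + 1)).map (gm j)) ++ [j]).Perm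
      ((List.range n).map (· + 1)) := by
  apply List.perm_of_nodup_nodup_toFinset_eq
  · rw [List.nodup_append']
    refine ⟨(nodup_range_map (n - 1)).map (gm_strictMono j).injective, by simp, ?_⟩
    intro a ha hb
    simp only [List.mem_singleton] at hb
    simp only [List.mem_map] at ha
    obtain ⟨y, _, hy⟩ := ha
    exact gm_ne j y (hy.trans hb)
  · exact nodup_range_map n
  · ext x
    simp only [List.toFinset_append, Finset.mem_union, List.mem_toFinset, List.mem_map,
      List.mem_range, List.mem_singleton]
    constructor
    · rintro (⟨y, ⟨z, hz, rfl⟩, rfl⟩ | hx)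
      · refine ⟨gm j (z + 1) - 1, ?_, ?_⟩ <;> (unfold gm; split_ifs <;> omega)
      · exact ⟨x - 1, by omega, by omega⟩
    · rintro ⟨z, hz, rfl⟩
      by_cases hxj : z + 1 = j
      · right; omega
      · left
        by_cases hlt : z + 1 < j
        · exact ⟨z + 1, ⟨z, by omega, rfl⟩, by unfold gm; split_ifs <;> omega⟩
        · exact ⟨z, ⟨z - 1, by omega, by omega⟩, by unfold gm; split_ifs <;> omega⟩

lemma finite_permOf (m : ℕ) : {w : List ℕ | IsPermOf m w}.Finite := by
  apply Set.Finite.subset (((List.range m).map (· + 1)).permutations.toFinset.finite_toSet)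
  intro w hw
  simpa [List.mem_permutations, IsPermOf] using hw

lemma mem_Bnij_iff {n i j : ℕ} {w : List ℕ} :
    w ∈ Bnij n i j ↔ (IsPermOf n w ∧ ¬Occ123 w ∧ ¬Occ4123 w) ∧ w ≠ excludedPerm n ∧
      w.idxOf n < w.idxOf 1 ∧ ∃ u, w = u ++ [i, j] := by
  simp only [Bnij, Bset, Lstar, Lset, Set.mem_setOf_eq, Set.mem_diff,
    Set.mem_singleton_iff]
  tauto

lemma mem_blast_iff {n x : ℕ} {w : List ℕ} :
    w ∈ {w ∈ Bset n | ∃ u, w = u ++ [x]} ↔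
      (IsPermOf n w ∧ ¬Occ123 w ∧ ¬Occ4123 w) ∧ w ≠ excludedPerm n ∧
      w.idxOf n < w.idxOf 1 ∧ ∃ u, w = u ++ [x] := by
  simp only [Bset, Lstar, Lset, Set.mem_setOf_eq, Set.mem_diff, Set.mem_singleton_iff]
  tauto

end Stmt4Aux
namespace Stmt4Aux

lemma delStd_eq (j : ℕ) (w : List ℕ) : delStd j w = w.dropLast.map (fm j) := rfl

lemma forward_mem {n i j : ℕ} (hn : 4 ≤ n) (hj : 2 ≤ j) (hji : j < i) (hi : i ≤ n - 1)
    {w : List ℕ} (hw : w ∈ Bnij n i j) :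
    delStd j w ∈ {w ∈ Bset (n - 1) | ∃ u, w = u ++ [i - 1]} := by
  rw [mem_Bnij_iff] at hw
  obtain ⟨⟨hperm, h123, h4123⟩, hexc, hidx, u, rfl⟩ := hw
  have hweq : u ++ [i, j] = (u ++ [i]) ++ [j] := by simp
  set l := u ++ [i] with hl
  have hnd : (u ++ [i, j]).Nodup := nodup_of_permOf hperm
  rw [hweq, List.nodup_append'] at hnd
  have hjl : j ∉ l := fun hjl => hnd.2.2 hjl (by simp)
  have hv : delStd j (u ++ [i, j]) = l.map (fm j) := by
    rw [delStd_eq, hweq, List.dropLast_concat]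
  have hlen : (u ++ [i, j]).length = n := length_of_permOf hperm
  have hlenl : l.length = n - 1 := by
    have h : (u ++ [i, j]).length = l.length + 1 := by simp [hl]
    omega
  have hmem : ∀ y ∈ l, 1 ≤ y ∧ y ≤ n := by
    intro y hy
    exact (mem_of_permOf hperm).mp (by rw [hweq]; exact List.mem_append_left _ hy)
  have hgetw : ∀ p, p < l.length → (u ++ [i, j]).getD p 0 = l.getD p 0 := by
    intro p hp; rw [hweq]; exact getD_append_left _ _ hp
  have hgetv : ∀ p, p < l.length → (l.map (fm j)).getD p 0 = fm j (l.getD p 0) :=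
    fun p hp => getD_map _ _ hp
  have hmapend : l.map (fm j) = (u.map (fm j)) ++ [i - 1] := by
    have hfi : fm j i = i - 1 := by unfold fm; rw [if_pos hji]
    simp [hl, hfi]
  rw [hv, mem_blast_iff]
  refine ⟨⟨?_, ?_, ?_⟩, ?_, ?_, ?_⟩
  · -- IsPermOf (n-1)
    have h2 : (l ++ [j]).Perm
        ((((List.range (n - 1)).map (· + 1)).map (gm j)) ++ [j]) := by
      rw [hweq] at hperm
      exact hperm.trans (perm_lift (by omega) (by omega)).symm
    have h3 : l.Perm (((List.range (n - 1)).map (· + 1)).map (gm j)) :=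
      (List.perm_append_right_iff _).mp h2
    have h4 := h3.map (fm j)
    have h5 : List.map (fm j) (List.map (gm j) ((List.range (n - 1)).map (· + 1)))
        = (List.range (n - 1)).map (· + 1) := by
      rw [List.map_map]
      exact (List.map_congr_left (fun a _ => fm_gm j a)).trans (List.map_id _)
    rw [h5] at h4
    exact h4
  · -- avoids 123
    rintro ⟨a, c, hac, hc, hlt1, hlt2⟩
    rw [List.length_map] at hc
    rw [hgetv a (by omega), hgetv (a + 1) (by omega)] at hlt1
    rw [hgetv (a + 1) (by omega), hgetv c hc] at hlt2
    refine h123 ⟨a, c, hac, by rw [hlen]; omega, ?_, ?_⟩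
    · rw [hgetw a (by omega), hgetw (a + 1) (by omega)]; exact fm_lt_fm hlt1
    · rw [hgetw (a + 1) (by omega), hgetw c hc]; exact fm_lt_fm hlt2
  · -- avoids 4123
    rintro ⟨a, b, c, hab, hbc, hc, hlt1, hlt2, hlt3⟩
    rw [List.length_map] at hc
    rw [hgetv b (by omega), hgetv c (by omega)] at hlt1
    rw [hgetv c (by omega), hgetv (c + 1) (by omega)] at hlt2
    rw [hgetv (c + 1) (by omega), hgetv a (by omega)] at hlt3
    refine h4123 ⟨a, b, c, hab, hbc, by rw [hlen]; omega, ?_, ?_, ?_⟩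
    · rw [hgetw b (by omega), hgetw c (by omega)]; exact fm_lt_fm hlt1
    · rw [hgetw c (by omega), hgetw (c + 1) (by omega)]; exact fm_lt_fm hlt2
    · rw [hgetw (c + 1) (by omega), hgetw a (by omega)]; exact fm_lt_fm hlt3
  · -- not excluded
    intro heq
    have hlast1 : (l.map (fm j)).getLast? = some (i - 1) := by
      rw [hmapend]; exact List.getLast?_concat
    rw [heq] at hlast1
    unfold excludedPerm at hlast1
    rw [List.getLast?_concat] at hlast1
    simp only [Option.some.injEq] at hlast1
    omega
  · -- indexOf
    have hn_mem : n ∈ l := by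
      have hmemw : n ∈ u ++ [i, j] := (mem_of_permOf hperm).mpr ⟨by omega, le_refl n⟩
      rw [hweq] at hmemw
      rcases List.mem_append.mp hmemw with h | h
      · exact h
      · simp at h; omega
    have h1_mem : (1 : ℕ) ∈ l := by
      have hmemw : (1 : ℕ) ∈ u ++ [i, j] := (mem_of_permOf hperm).mpr ⟨le_refl _, by omega⟩
      rw [hweq] at hmemw
      rcases List.mem_append.mp hmemw with h | h
      · exact h
      · simp at h; omega
    have e1 : (l.map (fm j)).idxOf (n - 1) = l.idxOf n := by
      have hfn : fm j n = n - 1 := by unfold fm; rw [if_pos (by omega)]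
      have := indexOf_map (fm j) l n (by
        intro y hy hfy
        have hy2 := hmem y hy
        have hyj : y ≠ j := fun h => hjl (h ▸ hy)
        unfold fm at hfy; split_ifs at hfy <;> omega)
      rwa [hfn] at this
    have e2 : (l.map (fm j)).idxOf 1 = l.idxOf 1 := by
      have hf1 : fm j 1 = 1 := by unfold fm; rw [if_neg (by omega)]
      have := indexOf_map (fm j) l 1 (by
        intro y hy hfy
        have hy2 := hmem y hy
        have hyj : y ≠ j := fun h => hjl (h ▸ hy)
        unfold fm at hfy; split_ifs at hfy <;> omega)
      rwa [hf1] at this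
    rw [hweq, List.idxOf_append_of_mem hn_mem, List.idxOf_append_of_mem h1_mem] at hidx
    rw [e1, e2]
    exact hidx
  · exact ⟨u.map (fm j), hmapend⟩

lemma backward_mem {n i j : ℕ} (hn : 4 ≤ n) (hj : 2 ≤ j) (hji : j < i) (hi : i ≤ n - 1)
    {v : List ℕ} (hv : v ∈ {w ∈ Bset (n - 1) | ∃ u, w = u ++ [i - 1]}) :
    v.map (gm j) ++ [j] ∈ Bnij n i j := by
  rw [mem_blast_iff] at hv
  obtain ⟨⟨hperm, h123, h4123⟩, hexc, hidx, u, hu⟩ := hv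
  have hlenv : v.length = n - 1 := length_of_permOf hperm
  have hget : ∀ p, p < v.length → (v.map (gm j) ++ [j]).getD p 0 = gm j (v.getD p 0) := by
    intro p hp
    rw [getD_append_left _ _ (by simpa using hp), getD_map _ _ hp]
  have hgetj : (v.map (gm j) ++ [j]).getD v.length 0 = j := by
    have h := getD_concat (v.map (gm j)) j
    rwa [List.length_map] at h
  have hlast : v.getD (v.length - 1) 0 = i - 1 := by
    have hlen' : v.length - 1 = u.length := by rw [hu]; simp
    rw [hlen', hu]
    have : (u ++ [i - 1]).getD u.length 0 = i - 1 := getD_concat u (i - 1)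
    exact this
  have hlenw : (v.map (gm j) ++ [j]).length = v.length + 1 := by simp
  rw [mem_Bnij_iff]
  refine ⟨⟨?_, ?_, ?_⟩, ?_, ?_, ?_⟩
  · exact ((hperm.map (gm j)).append_right [j]).trans (perm_lift (by omega) (by omega))
  · rintro ⟨a, c, hac, hc, hlt1, hlt2⟩
    rw [hlenw] at hc
    rcases Nat.lt_or_ge c v.length with hcv | hcv
    · rw [hget a (by omega), hget (a + 1) (by omega)] at hlt1
      rw [hget (a + 1) (by omega), hget c hcv] at hlt2
      exact h123 ⟨a, c, hac, by omega, gm_lt_gm hlt1, gm_lt_gm hlt2⟩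
    · have hcv' : c = v.length := by omega
      subst hcv'
      rw [hget a (by omega), hget (a + 1) (by omega)] at hlt1
      rw [hget (a + 1) (by omega), hgetj] at hlt2
      have h1 : v.getD a 0 < v.getD (a + 1) 0 := gm_lt_gm hlt1
      have h2 : v.getD (a + 1) 0 < j := lt_of_le_of_lt (gm_ge j _) hlt2
      by_cases hafin : a + 1 = v.length - 1
      · rw [hafin, hlast] at h2; omega
      · refine h123 ⟨a, v.length - 1, by omega, by omega, h1, ?_⟩
        rw [hlast]; omega
  · rintro ⟨a, b, c, hab, hbc, hc, hlt1, hlt2, hlt3⟩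
    rw [hlenw] at hc
    rcases Nat.lt_or_ge (c + 1) v.length with hcv | hcv
    · rw [hget b (by omega), hget c (by omega)] at hlt1
      rw [hget c (by omega), hget (c + 1) (by omega)] at hlt2
      rw [hget (c + 1) (by omega), hget a (by omega)] at hlt3
      exact h4123 ⟨a, b, c, hab, hbc, by omega, gm_lt_gm hlt1, gm_lt_gm hlt2, gm_lt_gm hlt3⟩
    · have hc1 : c + 1 = v.length := by omega
      rw [hc1, hgetj, hget c (by omega)] at hlt2
      have hcv' : c = v.length - 1 := by omega
      rw [hcv', hlast] at hlt2
      have := gm_ge j (i - 1)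
      omega
  · intro heq
    have h1 : (v.map (gm j) ++ [j]).getLast? = some j := List.getLast?_concat
    rw [heq] at h1
    unfold excludedPerm at h1
    rw [List.getLast?_concat] at h1
    simp only [Option.some.injEq] at h1
    omega
  · have hmem_n : n ∈ v.map (gm j) := by
      refine List.mem_map.mpr ⟨n - 1, (mem_of_permOf hperm).mpr ⟨by omega, le_refl _⟩, ?_⟩
      unfold gm; split_ifs <;> omega
    have hmem_1 : (1 : ℕ) ∈ v.map (gm j) := by
      refine List.mem_map.mpr ⟨1, (mem_of_permOf hperm).mpr ⟨le_refl _, by omega⟩, ?_⟩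
      unfold gm; split_ifs <;> omega
    have e1 : (v.map (gm j)).idxOf n = v.idxOf (n - 1) := by
      have hg : gm j (n - 1) = n := by unfold gm; split_ifs <;> omega
      have h := indexOf_map (gm j) v (n - 1) (fun y _ hh => (gm_strictMono j).injective hh)
      rwa [hg] at h
    have e2 : (v.map (gm j)).idxOf 1 = v.idxOf 1 := by
      have hg : gm j 1 = 1 := by unfold gm; split_ifs <;> omega
      have h := indexOf_map (gm j) v 1 (fun y _ hh => (gm_strictMono j).injective hh)
      rwa [hg] at h
    rw [List.idxOf_append_of_mem hmem_n, List.idxOf_append_of_mem hmem_1, e1, e2]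
    exact hidx
  · refine ⟨u.map (gm j), ?_⟩
    have hg : gm j (i - 1) = i := by unfold gm; split_ifs <;> omega
    rw [hu, List.map_append]
    simp [hg]

lemma left_inv {n i j : ℕ} {w : List ℕ} (hperm : IsPermOf n w) (hu : ∃ u, w = u ++ [i, j]) :
    (delStd j w).map (gm j) ++ [j] = w := by
  obtain ⟨u, rfl⟩ := hu
  have hweq : u ++ [i, j] = (u ++ [i]) ++ [j] := by simp
  have hnd : (u ++ [i, j]).Nodup := nodup_of_permOf hperm
  rw [hweq, List.nodup_append'] at hnd
  have hjl : j ∉ u ++ [i] := fun hjl => hnd.2.2 hjl (by simp)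
  rw [hweq, delStd_eq, List.dropLast_concat, List.map_map]
  congr 1
  exact (List.map_congr_left (fun a ha => gm_fm j a (fun h => hjl (h ▸ ha)))).trans
    (List.map_id _)

lemma right_inv (j : ℕ) (v : List ℕ) : delStd j (v.map (gm j) ++ [j]) = v := by
  rw [delStd_eq, List.dropLast_concat, List.map_map]
  exact (List.map_congr_left (fun a _ => fm_gm j a)).trans (List.map_id _)

end Stmt4Aux
theorem stmt4 (n i j : ℕ) (hn : 4 ≤ n) (hj : 2 ≤ j) (hji : j < i) (hi : i ≤ n - 1) :
    Set.BijOn (delStd j) (Bnij n i j) {w ∈ Bset (n - 1) | ∃ u, w = u ++ [i - 1]} ∧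
    bcount n i j = ∑ k ∈ (Finset.Icc 1 (n - 1)).erase (i - 1), bcount (n - 1) k (i - 1) := by
  classical
  have hbij : Set.BijOn (delStd j) (Bnij n i j) {w ∈ Bset (n - 1) | ∃ u, w = u ++ [i - 1]} := by
    refine Set.InvOn.bijOn (f' := fun v => v.map (Stmt4Aux.gm j) ++ [j]) ⟨?_, ?_⟩ ?_ ?_
    · intro w hw
      obtain ⟨⟨hperm, -, -⟩, -, -, hu⟩ := Stmt4Aux.mem_Bnij_iff.mp hw
      exact Stmt4Aux.left_inv hperm hu
    · intro v _
      exact Stmt4Aux.right_inv j v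
    · intro w hw
      exact Stmt4Aux.forward_mem hn hj hji hi hw
    · intro v hv
      exact Stmt4Aux.backward_mem hn hj hji hi hv
  refine ⟨hbij, ?_⟩
  have hfin : ∀ m k x : ℕ, (Bnij m k x).Finite := fun m k x =>
    (Stmt4Aux.finite_permOf m).subset (fun w hw => (Stmt4Aux.mem_Bnij_iff.mp hw).1.1)
  have hTfin : {w ∈ Bset (n - 1) | ∃ u, w = u ++ [i - 1]}.Finite :=
    (Stmt4Aux.finite_permOf (n - 1)).subset
      (fun w hw => (Stmt4Aux.mem_blast_iff.mp hw).1.1)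
  have hcard1 : bcount n i j = {w ∈ Bset (n - 1) | ∃ u, w = u ++ [i - 1]}.ncard := by
    rw [show bcount n i j = (Bnij n i j).ncard from rfl,
      ← Set.ncard_image_of_injOn hbij.injOn, hbij.image_eq]
  have hU : {w ∈ Bset (n - 1) | ∃ u, w = u ++ [i - 1]}
      = ⋃ k ∈ ((Finset.Icc 1 (n - 1)).erase (i - 1) : Finset ℕ), Bnij (n - 1) k (i - 1) := by
    ext w
    simp only [Set.mem_iUnion, exists_prop]
    constructor
    · intro hw
      obtain ⟨⟨hperm, h1, h2⟩, h3, h4, u, hu⟩ := Stmt4Aux.mem_blast_iff.mp hw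
      have hlenw : w.length = n - 1 := Stmt4Aux.length_of_permOf hperm
      have hulen : u.length = n - 2 := by
        have h : w.length = u.length + 1 := by rw [hu]; simp
        omega
      rcases List.eq_nil_or_concat u with rfl | ⟨u', k, rfl⟩
      · simp at hulen; omega
      · have hwk : w = u' ++ [k, i - 1] := by rw [hu]; simp
        have hk_mem : k ∈ w := by rw [hwk]; simp
        have hk_range := (Stmt4Aux.mem_of_permOf hperm).mp hk_mem
        have hknei : k ≠ i - 1 := by
          have hnd := Stmt4Aux.nodup_of_permOf hperm
          rw [hu, List.nodup_append'] at hnd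
          intro h
          have hdisj : List.Disjoint (u'.concat k) [i - 1] := hnd.2.2
          exact hdisj (show k ∈ u'.concat k by simp) (by simp [h])
        refine ⟨k, ?_, ?_⟩
        · rw [Finset.mem_erase, Finset.mem_Icc]
          exact ⟨hknei, hk_range⟩
        · exact Stmt4Aux.mem_Bnij_iff.mpr ⟨⟨hperm, h1, h2⟩, h3, h4, u', hwk⟩
    · rintro ⟨k, _, hw⟩
      obtain ⟨ha, hb, hc, u, hu⟩ := Stmt4Aux.mem_Bnij_iff.mp hw
      refine Stmt4Aux.mem_blast_iff.mpr ⟨ha, hb, hc, u ++ [k], ?_⟩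
      rw [hu]; simp
  rw [hcard1, hU]
  have hfinU : (⋃ k ∈ ((Finset.Icc 1 (n - 1)).erase (i - 1) : Finset ℕ),
      Bnij (n - 1) k (i - 1)).Finite := hU ▸ hTfin
  rw [Set.ncard_eq_toFinset_card _ hfinU]
  have hF : hfinU.toFinset = ((Finset.Icc 1 (n - 1)).erase (i - 1)).biUnion
      (fun k => (hfin (n - 1) k (i - 1)).toFinset) := by
    ext w
    simp [Set.Finite.mem_toFinset, Set.mem_iUnion]
  rw [hF, Finset.card_biUnion]
  · apply Finset.sum_congr rfl
    intro k _
    rw [show bcount (n - 1) k (i - 1) = (Bnij (n - 1) k (i - 1)).ncard from rfl,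
      Set.ncard_eq_toFinset_card _ (hfin (n - 1) k (i - 1))]
  · intro x _ y _ hxy
    rw [Function.onFun, Finset.disjoint_left]
    intro w hwx hwy
    rw [Set.Finite.mem_toFinset] at hwx hwy
    obtain ⟨-, -, -, u, hu⟩ := Stmt4Aux.mem_Bnij_iff.mp hwx
    obtain ⟨-, -, -, u', hu'⟩ := Stmt4Aux.mem_Bnij_iff.mp hwy
    apply hxy
    have h := hu.symm.trans hu'
    have h2 : (u ++ [x]) ++ [i - 1] = (u' ++ [y]) ++ [i - 1] := by simpa using h
    have hl2 := congrArg List.length h2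
    simp only [List.length_append, List.length_singleton] at hl2
    have h3 := (List.append_inj h2 (by simp; omega)).1
    have hl3 := congrArg List.length h3
    simp only [List.length_append, List.length_singleton] at hl3
    have h4 := (List.append_inj h3 (by omega)).2
    simpa using h4
end

section
/- For n ≥ 2 and 1 ≤ j ≤ n−1, c(n,n,j) = 1 if j = 2 and c(n,n,j) = 0 otherwise; when j = 2 the unique permutation counted is (n−1)(n−2)⋯1 n 2. (Here for n = 2, c(2,2,1) = 0.) -/
open List

namespace Stmt5Aux

def pre (n : ℕ) : List ℕ := ((List.range (n-3)).map (· + 3)).reverse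
def tgt (n : ℕ) : List ℕ := pre n ++ [1]
def W (n : ℕ) : List ℕ := tgt n ++ [n, 2]

lemma length_pre (n : ℕ) : (pre n).length = n - 3 := by simp [pre]
lemma length_tgt (n : ℕ) (h3 : 3 ≤ n) : (tgt n).length = n - 2 := by
  simp [tgt, length_pre]; omega
lemma length_W (n : ℕ) (h3 : 3 ≤ n) : (W n).length = n := by
  simp [W, tgt, length_pre]; omega

lemma h1 (n : ℕ) (h3 : 3 ≤ n) :
    (List.range n).map (· + 1) = [1,2] ++ (List.range (n-3)).map (· + 3) ++ [n] := by
  have hn : n = (2 + (n-3)) + 1 := by omega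
  rw [hn, List.range_succ, List.range_add]
  simp [List.range_succ, List.map_map, Function.comp]
  exact fun a _ => by omega

lemma h2 (n : ℕ) (h3 : 3 ≤ n) :
    (List.range (n-1)).map (· + 1) = [1,2] ++ (List.range (n-3)).map (· + 3) := by
  have hn : n - 1 = 2 + (n-3) := by omega
  rw [hn, List.range_add]
  simp [List.range_succ, List.map_map, Function.comp]
  exact fun a _ => by omega

lemma erase_eq (n : ℕ) (h3 : 3 ≤ n) :
    (((List.range (n - 1)).map (· + 1)).reverse).erase 2 = tgt n := by
  rw [h2 n h3, List.reverse_append, List.erase_append_right]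
  · rfl
  · simp [pre]

lemma permW (n : ℕ) (h3 : 3 ≤ n) : (W n).Perm ((List.range n).map (· + 1)) := by
  rw [h1 n h3]
  set M := (List.range (n-3)).map (· + 3) with hM
  calc W n = pre n ++ [1,n,2] := by simp [W, tgt]
    _ ~ M ++ [1,n,2] := Perm.append_right _ (reverse_perm _)
    _ ~ [1,n,2] ++ M := perm_append_comm
    _ = 1 :: n :: 2 :: M := rfl
    _ ~ 1 :: 2 :: n :: M := Perm.cons _ (Perm.swap _ _ _)
    _ ~ 1 :: 2 :: (M ++ [n]) := Perm.cons _ (Perm.cons _ (perm_append_comm (l₁ := [n]) (l₂ := M)))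
    _ = [1,2] ++ M ++ [n] := by simp

lemma getW (n i : ℕ) (h3 : 3 ≤ n) (hi : i < n) :
    (W n).getD i 0 = if i < n-3 then n-1-i else if i = n-3 then 1
      else if i = n-2 then n else 2 := by
  rw [show W n = tgt n ++ [n,2] from rfl]
  by_cases hc1 : i < n - 3
  · rw [List.getD_append _ _ _ _ (by rw [length_tgt n h3]; omega),
      show tgt n = pre n ++ [1] from rfl,
      List.getD_append _ _ _ _ (by rw [length_pre]; omega)]
    rw [List.getD_eq_getElem _ _ (by rw [length_pre]; omega)]
    simp only [pre, List.getElem_reverse, List.getElem_map, List.getElem_range,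
      List.length_map, List.length_range]
    rw [if_pos hc1]
    omega
  · by_cases hc2 : i = n - 3
    · rw [List.getD_append _ _ _ _ (by rw [length_tgt n h3]; omega),
        show tgt n = pre n ++ [1] from rfl,
        List.getD_append_right _ _ _ _ (by rw [length_pre]; omega)]
      rw [length_pre]
      have : i - (n - 3) = 0 := by omega
      rw [this]
      simp only [List.getD_cons_zero]
      split_ifs <;> omega
    · rw [List.getD_append_right _ _ _ _ (by rw [length_tgt n h3]; omega),
        length_tgt n h3]
      by_cases hc3 : i = n - 2
      · rw [show i - (n-2) = 0 by omega]
        simp only [List.getD_cons_zero]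
        split_ifs <;> omega
      · rw [show i - (n-2) = 1 by omega]
        simp only [List.getD_cons_succ, List.getD_cons_zero]
        split_ifs <;> omega

lemma sorted_tgt (n : ℕ) : (tgt n).Pairwise (· > ·) := by
  have hp : (pre n).Pairwise (· > ·) := by
    unfold pre
    rw [List.pairwise_reverse]
    refine List.Pairwise.map _ ?_ List.pairwise_lt_range
    intro a b hab
    simp only [gt_iff_lt]
    omega
  unfold tgt
  rw [List.pairwise_append]
  refine ⟨hp, List.pairwise_singleton _ _, ?_⟩
  intro x hx y hy
  simp [pre] at hx
  simp at hy
  omega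

lemma nodup_tgt (n : ℕ) : (tgt n).Nodup := (sorted_tgt n).nodup

set_option maxHeartbeats 1600000 in
lemma not_occ123_W (n : ℕ) (h3 : 3 ≤ n) : ¬ Occ123 (W n) := by
  rintro ⟨a, c, hac, hc, hv1, hv2⟩
  rw [length_W n h3] at hc
  rw [getW n a h3 (by omega)] at hv1
  rw [getW n (a+1) h3 (by omega)] at hv1 hv2
  rw [getW n c h3 hc] at hv2
  split_ifs at hv1 hv2 <;> omega

set_option maxHeartbeats 1600000 in
lemma not_occ4123_W (n : ℕ) (h3 : 3 ≤ n) : ¬ Occ4123 (W n) := by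
  rintro ⟨a, b, c, hab, hbc, hc, hv1, hv2, hv3⟩
  rw [length_W n h3] at hc
  rw [getW n b h3 (by omega)] at hv1
  rw [getW n c h3 (by omega)] at hv1 hv2
  rw [getW n (c+1) h3 (by omega)] at hv2 hv3
  rw [getW n a h3 (by omega)] at hv3
  split_ifs at hv1 hv2 hv3 <;> omega

/-- helper: in a nodup list, position determines indexOf. -/
lemma indexOf_eq_of_getElem (w : List ℕ) (hnd : w.Nodup) (i : ℕ) (hi : i < w.length)
    (x : ℕ) (hx : w[i] = x) : w.idxOf x = i := by
  have hmem : x ∈ w := hx ▸ List.getElem_mem hi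
  have hlt : w.idxOf x < w.length := List.idxOf_lt_length_iff.mpr hmem
  have := List.getElem_idxOf hlt
  exact (hnd.getElem_inj_iff).mp (this.trans hx.symm)

end Stmt5Aux

namespace Stmt5Aux

set_option maxHeartbeats 1000000 in
lemma empty_lemma (n : ℕ) (hn : 2 ≤ n) : ∀ j', j' ≠ 2 → Cnij n n j' = ∅ := by
  have hR : ((List.range n).map (· + 1)).Nodup :=
    List.Nodup.map (fun a b h => by omega) List.nodup_range
  intro j' hj2
  ext w
  simp only [Set.mem_empty_iff_false, iff_false]
  rintro ⟨⟨⟨⟨hperm, h123, h4123⟩, hne⟩, hidx1, hidx2⟩, u, hu⟩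
  subst hu
  have hnd : (u ++ [n, j']).Nodup := hperm.nodup_iff.mpr hR
  have hlen : (u ++ [n, j']).length = n := by rw [hperm.length_eq]; simp
  have hul : u.length = n - 2 := by simp at hlen; omega
  have hgn : (u ++ [n, j']).getD (n-2) 0 = n := by
    rw [List.getD_append_right _ _ _ _ (by omega), show n - 2 - u.length = 0 by omega]
    rfl
  have hgj : (u ++ [n, j']).getD (n-1) 0 = j' := by
    rw [List.getD_append_right _ _ _ _ (by omega), show n - 1 - u.length = 1 by omega]
    rfl
  have hlen2 : n - 2 < (u ++ [n, j']).length := by simp; omega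
  have hlen1 : n - 1 < (u ++ [n, j']).length := by simp; omega
  have hin : (u ++ [n, j']).idxOf n = n - 2 :=
    Stmt5Aux.indexOf_eq_of_getElem _ hnd _ hlen2 _
      ((List.getD_eq_getElem _ 0 hlen2).symm.trans hgn)
  have h2mem : 2 ∈ u ++ [n, j'] := by
    rw [hperm.mem_iff]
    simp only [List.mem_map, List.mem_range]
    exact ⟨1, by omega, rfl⟩
  have h2lt : (u ++ [n, j']).idxOf 2 < (u ++ [n, j']).length :=
    List.idxOf_lt_length_iff.mpr h2mem
  have h2eq : (u ++ [n, j']).idxOf 2 = n - 1 := by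
    rw [hin] at hidx2; omega
  have hg2 : (u ++ [n, j']).getD ((u ++ [n, j']).idxOf 2) 0 = 2 := by
    rw [List.getD_eq_getElem _ 0 h2lt]
    exact List.getElem_idxOf h2lt
  rw [h2eq, hgj] at hg2
  exact hj2 hg2

set_option maxHeartbeats 1000000 in
lemma key_lemma (n : ℕ) (hn : 2 ≤ n) (h3 : 3 ≤ n) : Cnij n n 2 = {Stmt5Aux.tgt n ++ [n, 2]} := by
  have hR : ((List.range n).map (· + 1)).Nodup :=
    List.Nodup.map (fun a b h => by omega) List.nodup_range
  have hRmem : ∀ x ∈ (List.range n).map (· + 1), x ≤ n := by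
    intro x hx
    simp only [List.mem_map, List.mem_range] at hx
    obtain ⟨a, ha, rfl⟩ := hx
    omega
  ext w
  simp only [Set.mem_singleton_iff]
  constructor
  · rintro ⟨⟨⟨⟨hperm, h123, h4123⟩, hne⟩, hidx1, hidx2⟩, u, hu⟩
    subst hu
    have hnd : (u ++ [n, 2]).Nodup := hperm.nodup_iff.mpr hR
    have hlen : (u ++ [n, 2]).length = n := by rw [hperm.length_eq]; simp
    have hul : u.length = n - 2 := by simp at hlen; omega
    have hnu : n ∉ u := by
      intro hmem
      have hdisj := (List.nodup_append.mp hnd).2.2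
      exact hdisj n hmem n (by simp) rfl
    have hub : ∀ x ∈ u, x < n := by
      intro x hx
      have hx' : x ∈ u ++ [n, 2] := by simp [hx]
      have := hRmem x (hperm.mem_iff.mp hx')
      rcases lt_or_eq_of_le this with h | h
      · exact h
      · exact absurd (h ▸ hx) hnu
    suffices hu' : u = Stmt5Aux.tgt n by rw [hu']
    have hchain : u.IsChain (· > ·) := by
      rw [List.isChain_iff_getElem]
      intro i hilt
      have hiu : i < u.length := by omega
      have hiu1 : i + 1 < u.length := by omega
      by_contra hnot
      simp only [gt_iff_lt, not_lt] at hnot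
      have hne' : u[i]'hiu ≠ u[i+1]'hiu1 := by
        intro hEq
        have hndu : u.Nodup := (List.nodup_append.mp hnd).1
        have := (hndu.getElem_inj_iff).mp hEq
        omega
      have hlt2 : u[i]'hiu < u[i+1]'hiu1 := lt_of_le_of_ne hnot hne'
      apply h123
      have e1 : (u ++ [n, 2]).getD i 0 = u[i]'hiu := by
        rw [List.getD_append u [n,2] 0 i hiu]
        exact List.getD_eq_getElem u 0 hiu
      have e2 : (u ++ [n, 2]).getD (i+1) 0 = u[i+1]'hiu1 := by
        rw [List.getD_append u [n,2] 0 (i+1) hiu1]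
        exact List.getD_eq_getElem u 0 hiu1
      have e3 : (u ++ [n, 2]).getD u.length 0 = n := by
        rw [List.getD_append_right u [n,2] 0 u.length (le_refl _), Nat.sub_self]
        rfl
      refine ⟨i, u.length, by omega, by simp, ?_, ?_⟩
      · rw [e1, e2]; exact hlt2
      · rw [e2, e3]; exact hub _ (List.getElem_mem _)
    have hsorted : u.Pairwise (· > ·) := List.isChain_iff_pairwise.mp hchain
    have hpermu : u ~ Stmt5Aux.tgt n := by
      have h := hperm.trans (Stmt5Aux.permW n h3).symm
      exact (List.perm_append_right_iff _).mp h
    exact hpermu.eq_of_pairwise (fun a _ b _ h1 h2 => by omega) hsorted (Stmt5Aux.sorted_tgt n)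
  · intro hw
    subst hw
    show Stmt5Aux.W n ∈ Cnij n n 2
    have hWnd : (Stmt5Aux.W n).Nodup := (Stmt5Aux.permW n h3).nodup_iff.mpr hR
    have hWlen := Stmt5Aux.length_W n h3
    have hg : ∀ i (hi : i < n), (Stmt5Aux.W n)[i]'(by omega) =
        (if i < n-3 then n-1-i else if i = n-3 then 1 else if i = n-2 then n else 2) := by
      intro i hi
      rw [← List.getD_eq_getElem _ 0 (by omega)]
      exact Stmt5Aux.getW n i h3 hi
    have hi1 : (Stmt5Aux.W n).idxOf 1 = n - 3 := by
      refine Stmt5Aux.indexOf_eq_of_getElem _ hWnd _ (by omega) _ ?_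
      rw [hg (n-3) (by omega)]
      simp
    have hin : (Stmt5Aux.W n).idxOf n = n - 2 := by
      refine Stmt5Aux.indexOf_eq_of_getElem _ hWnd _ (by omega) _ ?_
      rw [hg (n-2) (by omega)]
      rw [if_neg (by omega), if_neg (by omega), if_pos rfl]
    have hi2 : (Stmt5Aux.W n).idxOf 2 = n - 1 := by
      refine Stmt5Aux.indexOf_eq_of_getElem _ hWnd _ (by omega) _ ?_
      rw [hg (n-1) (by omega)]
      rw [if_neg (by omega), if_neg (by omega), if_neg (by omega)]
    have hneW : Stmt5Aux.W n ≠ excludedPerm n := by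
      intro hEq
      have hv1 : (Stmt5Aux.W n).getD (n-1) 0 = 2 := by
        rw [Stmt5Aux.getW n (n-1) h3 (by omega)]
        rw [if_neg (by omega), if_neg (by omega), if_neg (by omega)]
      have hv2 : (excludedPerm n).getD (n-1) 0 = n := by
        have hl : (((List.range (n-1)).map (· + 1)).reverse).length = n - 1 := by simp
        unfold excludedPerm
        rw [List.getD_append_right (((List.range (n-1)).map (· + 1)).reverse) [n] 0 (n-1)
          (le_of_eq hl), hl, Nat.sub_self]
        rfl
      rw [hEq, hv2] at hv1
      omega
    exact ⟨⟨⟨⟨Stmt5Aux.permW n h3, Stmt5Aux.not_occ123_W n h3,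
      Stmt5Aux.not_occ4123_W n h3⟩, hneW⟩,
      by rw [hi1, hin]; omega, by rw [hin, hi2]; omega⟩, Stmt5Aux.tgt n, rfl⟩

end Stmt5Aux

theorem stmt5 (n j : ℕ) (hn : 2 ≤ n) (hj1 : 1 ≤ j) (hj : j ≤ n - 1) :
    ccount n n j = (if j = 2 then 1 else 0) ∧
    (3 ≤ n → Cnij n n 2 =
      {(((List.range (n - 1)).map (· + 1)).reverse).erase 2 ++ [n, 2]}) := by
  have key := Stmt5Aux.key_lemma n hn
  constructor
  · by_cases hj2 : j = 2
    · subst hj2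
      have h3 : 3 ≤ n := by omega
      rw [if_pos rfl]
      unfold ccount
      rw [(key h3)]
      exact Set.ncard_singleton _
    · rw [if_neg hj2]
      unfold ccount
      rw [Stmt5Aux.empty_lemma n hn j hj2]
      exact Set.ncard_empty _
  · intro h3
    rw [(key h3), Stmt5Aux.erase_eq n h3]
end

section
/- For n ≥ 4, c(n,2,n−1) = 2^{n−4}. Explicitly, the members of C_{n,2,n−1} are exactly the permutations of the form α 1 n β 2 (n−1), where α and β are decreasing sequences partitioning the set {3,…,n−2} (α possibly empty), and every such word lies in C_{n,2,n−1}. -/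
open List

namespace Stmt6Aux

/-- the list [3, 4, …, m+2]. -/
def midL (m : ℕ) : List ℕ := (List.range m).map (· + 3)

lemma length_midL (m : ℕ) : (midL m).length = m := by simp [midL]

lemma nodup_midL (m : ℕ) : (midL m).Nodup :=
  List.nodup_range.map (fun a b h => by omega)

lemma mem_midL {m x : ℕ} : x ∈ midL m ↔ 3 ≤ x ∧ x < m + 3 := by
  simp only [midL, List.mem_map, List.mem_range]
  constructor
  · rintro ⟨i, hi, rfl⟩; omega
  · intro h; exact ⟨x - 3, by omega, by omega⟩

lemma fullL : ∀ m : ℕ, (List.range (m+4)).map (· + 1) = 1 :: 2 :: (midL m ++ [m+3, m+4])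
  | 0 => rfl
  | (m+1) => by
    have h : m+1+4 = (m+4)+1 := rfl
    rw [h, List.range_succ, List.map_append, fullL m]
    simp only [midL, List.range_succ, List.map_append, List.map_cons, List.map_nil]
    simp only [List.cons_append, List.append_assoc, List.nil_append]

lemma sorted_getD_lt {l : List ℕ} (h : List.Pairwise (· > ·) l) {i j : ℕ} (hij : i < j)
    (hj : j < l.length) : l.getD j 0 < l.getD i 0 := by
  rw [List.getD_eq_getElem l 0 hj, List.getD_eq_getElem l 0 (lt_trans hij hj)]
  exact List.pairwise_iff_getElem.1 h i j (lt_trans hij hj) hj hij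

lemma getD_mem {l : List ℕ} {i : ℕ} (h : i < l.length) : l.getD i 0 ∈ l := by
  rw [List.getD_eq_getElem l 0 h]; exact List.getElem_mem h

lemma mem_full {m x : ℕ} : x ∈ (List.range (m+4)).map (· + 1) ↔ 1 ≤ x ∧ x ≤ m+4 := by
  simp only [List.mem_map, List.mem_range]
  constructor
  · rintro ⟨i, hi, rfl⟩; omega
  · intro h; exact ⟨x - 1, by omega, by omega⟩

lemma nodup_full (m : ℕ) : ((List.range (m+4)).map (· + 1)).Nodup :=
  List.nodup_range.map (fun a b h => by omega)

/-- membership in `Cnij (m+4) 2 (m+3)` unfolded. -/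
lemma mem_Cnij_iff {m : ℕ} {w : List ℕ} :
    w ∈ Cnij (m+4) 2 (m+3) ↔
      (w.Perm ((List.range (m+4)).map (· + 1)) ∧ ¬ Occ123 w ∧ ¬ Occ4123 w) ∧
      w ≠ excludedPerm (m+4) ∧
      (w.idxOf 1 < w.idxOf (m+4) ∧ w.idxOf (m+4) < w.idxOf 2) ∧
      ∃ u, w = u ++ [2, m+3] := by
  simp only [Cnij, Cset, Lstar, Lset, IsPermOf, Set.mem_setOf_eq, Set.mem_diff,
    Set.mem_singleton_iff]
  tauto

/-- the "⊇" direction : every word of the stated shape lies in `C_{n,2,n-1}`. -/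
lemma mem_C (m : ℕ) (α β : List ℕ)
    (hα : List.Pairwise (· > ·) α) (hβ : List.Pairwise (· > ·) β)
    (hperm : (α ++ β).Perm (midL m)) :
    (α ++ 1 :: (m+4) :: (β ++ [2, m+3])) ∈ Cnij (m+4) 2 (m+3) := by
  obtain ⟨w, hw⟩ : ∃ w : List ℕ, w = α ++ 1 :: (m+4) :: (β ++ [2, m+3]) := ⟨_, rfl⟩
  rw [← hw]
  have hlab : α.length + β.length = m := by
    have h := hperm.length_eq
    simp only [List.length_append, length_midL] at h
    exact h
  have hlen : w.length = m + 4 := by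
    rw [hw]
    simp only [List.length_append, List.length_cons, List.length_nil]
    omega
  have hmemαβ : ∀ x, x ∈ α ∨ x ∈ β → 3 ≤ x ∧ x < m + 3 := by
    intro x hx
    exact mem_midL.1 (hperm.mem_iff.1 (List.mem_append.2 hx))
  -- the permutation fact
  have hpw : w.Perm ((List.range (m+4)).map (· + 1)) := by
    rw [fullL, List.perm_iff_count]
    intro a
    have hc := List.perm_iff_count.1 hperm a
    simp only [List.count_append, List.count_cons, midL] at hc ⊢
    simp only [hw, List.count_append, List.count_cons, List.count_nil]
    split_ifs <;> omega
  have hnd : w.Nodup := (hpw.nodup_iff).2 (nodup_full m)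
  -- getD facts
  have g1 : ∀ i, i < α.length → w.getD i 0 = α.getD i 0 := fun i hi => by
    rw [hw]; exact List.getD_append _ _ _ _ hi
  have g2 : w.getD α.length 0 = 1 := by
    rw [hw, List.getD_append_right _ _ _ _ (le_refl _), Nat.sub_self, List.getD_cons_zero]
  have g3 : w.getD (α.length + 1) 0 = m + 4 := by
    rw [hw, List.getD_append_right _ _ _ _ (Nat.le_add_right _ _), Nat.add_sub_cancel_left,
      List.getD_cons_succ, List.getD_cons_zero]
  have g4 : ∀ j, j < β.length → w.getD (α.length + 2 + j) 0 = β.getD j 0 := by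
    intro j hj
    rw [hw, List.getD_append_right _ _ _ _ (by omega),
      show α.length + 2 + j - α.length = j + 1 + 1 from by omega,
      List.getD_cons_succ, List.getD_cons_succ, List.getD_append _ _ _ _ hj]
  have g5 : w.getD (m+2) 0 = 2 := by
    rw [hw, List.getD_append_right _ _ _ _ (by omega),
      show m + 2 - α.length = β.length + 1 + 1 from by omega,
      List.getD_cons_succ, List.getD_cons_succ,
      List.getD_append_right _ _ _ _ (le_refl _), Nat.sub_self, List.getD_cons_zero]
  have g6 : w.getD (m+3) 0 = m + 3 := by
    rw [hw, List.getD_append_right _ _ _ _ (by omega),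
      show m + 3 - α.length = β.length + 2 + 1 from by omega,
      List.getD_cons_succ, List.getD_cons_succ,
      List.getD_append_right _ _ _ _ (by omega),
      show β.length + 1 - β.length = 0 + 1 from by omega,
      List.getD_cons_succ, List.getD_cons_zero]
  -- bounds
  have B : ∀ i, i < m + 4 → 1 ≤ w.getD i 0 ∧ w.getD i 0 ≤ m + 4 := by
    intro i hi
    have hiw : i < w.length := by omega
    have hmem : w.getD i 0 ∈ α ++ 1 :: (m+4) :: (β ++ [2, m+3]) := by
      rw [← hw]; exact getD_mem hiw
    simp only [List.mem_append, List.mem_cons, List.mem_singleton, List.not_mem_nil,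
      or_false] at hmem
    rcases hmem with h | h | h | h | h | h
    · have := hmemαβ _ (Or.inl h); omega
    · omega
    · omega
    · have := hmemαβ _ (Or.inr h); omega
    · omega
    · omega
  -- uniqueness via nodup
  have uniq : ∀ i j, i < m + 4 → j < m + 4 → w.getD i 0 = w.getD j 0 → i = j := by
    intro i j hi hj hij
    have hiw : i < w.length := by omega
    have hjw : j < w.length := by omega
    rw [List.getD_eq_getElem _ _ hiw, List.getD_eq_getElem _ _ hjw] at hij
    have h1 := List.Nodup.idxOf_getElem hnd i hiw
    rw [hij, List.Nodup.idxOf_getElem hnd j hjw] at h1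
    omega
  -- ascent positions
  have A : ∀ a, a + 1 < m + 4 → w.getD a 0 < w.getD (a+1) 0 → a = α.length ∨ a = m + 2 := by
    intro a ha hasc
    by_contra hcon
    push_neg at hcon
    obtain ⟨h1, h2⟩ := hcon
    have ha' : a + 1 < m + 3 := by omega
    rcases Nat.lt_trichotomy a α.length with hlt | heq | hgt
    · -- a < |α|
      rcases Nat.lt_or_ge (a+1) α.length with hlt2 | hge2
      · -- both in α : descent
        rw [g1 a hlt, g1 (a+1) hlt2] at hasc
        have hαs : α.getD (a+1) 0 < α.getD a 0 := sorted_getD_lt hα (by omega) hlt2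
        omega
      · -- a+1 = |α| : w (a+1) = 1, w a ∈ α
        have hae : a + 1 = α.length := by omega
        rw [← hae] at g2
        rw [g1 a hlt, g2] at hasc
        have hm : α.getD a 0 ∈ α := getD_mem hlt
        have := hmemαβ _ (Or.inl hm)
        omega
    · exact absurd heq h1
    · -- a > |α|
      rcases Nat.lt_trichotomy a (α.length + 1) with h | h | h
      · omega
      · -- a = |α|+1 : w a = m+4
        rw [h, g3] at hasc
        have := B (α.length + 1 + 1) (by omega)
        omega
      · -- a ≥ |α|+2 : in β region or beyond
        have ha2 : α.length + 2 ≤ a := by omega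
        rcases Nat.lt_or_ge (a+1) (m+2) with hb | hb
        · -- both in β region
          have hja : a - α.length - 2 < β.length := by omega
          have hja1 : a + 1 - α.length - 2 < β.length := by omega
          have e1 := g4 _ hja
          have e2 := g4 _ hja1
          rw [show α.length + 2 + (a - α.length - 2) = a from by omega] at e1
          rw [show α.length + 2 + (a + 1 - α.length - 2) = a + 1 from by omega] at e2
          rw [e1, e2] at hasc
          have hβs : β.getD (a + 1 - α.length - 2) 0 < β.getD (a - α.length - 2) 0 :=
            sorted_getD_lt hβ (by omega) hja1
          omega
        · -- a+1 = m+2 : w (a+1) = 2, w a ∈ β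
          have hae : a + 1 = m + 2 := by omega
          rw [← hae] at g5
          have hja : a - α.length - 2 < β.length := by omega
          have e1 := g4 _ hja
          rw [show α.length + 2 + (a - α.length - 2) = a from by omega] at e1
          rw [e1, g5] at hasc
          have hm : β.getD (a - α.length - 2) 0 ∈ β := getD_mem hja
          have := hmemαβ _ (Or.inr hm)
          omega
  -- avoidance of 123
  have h123 : ¬ Occ123 w := by
    rintro ⟨a, c, hac, hcl, hasc, hlt⟩
    rw [hlen] at hcl
    have ha : a + 1 < m + 4 := by omega
    rcases A a ha hasc with rfl | rfl
    · rw [g3] at hlt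
      have := B c (by omega)
      omega
    · omega
  -- avoidance of 4123
  have h4123 : ¬ Occ4123 w := by
    rintro ⟨a, b, c, hab, hbc, hcl, h1, h2, h3⟩
    rw [hlen] at hcl
    rcases A c (by omega) h2 with rfl | rfl
    · -- c = |α| : w c = 1
      rw [g2] at h1
      have := B b (by omega)
      omega
    · -- c = m+2
      rw [g5] at h1 h2
      rw [show m + 2 + 1 = m + 3 from rfl, g6] at h3
      have hBa := B a (by omega)
      have hwa : w.getD a 0 = m + 4 := by omega
      have ha : a = α.length + 1 := uniq a (α.length + 1) (by omega) (by omega) (by rw [hwa, g3])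
      have hBb := B b (by omega)
      have hwb : w.getD b 0 = 1 := by omega
      have hb : b = α.length := uniq b α.length (by omega) (by omega) (by rw [hwb, g2])
      omega
  -- not the excluded permutation
  have hne : w ≠ excludedPerm (m+4) := by
    intro h
    have hx : (excludedPerm (m+4)).getD (m+3) 0 = m + 3 := by rw [← h]; exact g6
    have hlen' : (((List.range (m+4-1)).map (· + 1)).reverse).length = m+3 := by simp
    rw [excludedPerm, List.getD_append_right _ _ _ _ (le_of_eq hlen'), hlen', Nat.sub_self,
      List.getD_cons_zero] at hx
    omega
  -- indexOf facts
  have hα1 : (1:ℕ) ∉ α := fun h => by have := hmemαβ _ (Or.inl h); omega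
  have hαn : (m+4) ∉ α := fun h => by have := hmemαβ _ (Or.inl h); omega
  have hα2 : (2:ℕ) ∉ α := fun h => by have := hmemαβ _ (Or.inl h); omega
  have hβ2 : (2:ℕ) ∉ β := fun h => by have := hmemαβ _ (Or.inr h); omega
  have hi1 : w.idxOf 1 = α.length := by
    rw [hw, List.idxOf_append_of_notMem hα1, List.idxOf_cons_self]
    omega
  have hin : w.idxOf (m+4) = α.length + 1 := by
    rw [hw, List.idxOf_append_of_notMem hαn, List.idxOf_cons_ne _ (by omega),
      List.idxOf_cons_self]
  have hi2 : w.idxOf 2 = α.length + 2 + β.length := by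
    rw [hw, List.idxOf_append_of_notMem hα2, List.idxOf_cons_ne _ (by omega),
      List.idxOf_cons_ne _ (by omega), List.idxOf_append_of_notMem hβ2,
      List.idxOf_cons_self]
    omega
  rw [mem_Cnij_iff]
  refine ⟨⟨hpw, h123, h4123⟩, hne, ⟨by omega, by omega⟩, ⟨α ++ 1 :: (m+4) :: β, by
    simp [hw, List.append_assoc]⟩⟩

end Stmt6Aux
namespace Stmt6Aux

lemma sorted_of_getD (l : List ℕ) (h : ∀ i, i + 1 < l.length → l.getD (i+1) 0 < l.getD i 0) :
    List.Pairwise (· > ·) l := by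
  rw [← List.isChain_iff_pairwise, List.isChain_iff_getElem]
  intro i hi
  have hx := h i (by omega)
  rw [List.getD_eq_getElem _ _ (by omega), List.getD_eq_getElem _ _ (by omega)] at hx
  simpa [List.get_eq_getElem] using hx

/-- the "⊆" direction : every member of `C_{n,2,n-1}` has the stated shape. -/
lemma struct (m : ℕ) (w : List ℕ) (hmem : w ∈ Cnij (m+4) 2 (m+3)) :
    ∃ α β : List ℕ, List.Pairwise (· > ·) α ∧ List.Pairwise (· > ·) β ∧
      (α ++ β).Perm (midL m) ∧ w = α ++ 1 :: (m+4) :: (β ++ [2, m+3]) := by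
  rw [mem_Cnij_iff] at hmem
  obtain ⟨⟨hpw, h123, -⟩, -, ⟨h1n, hn2⟩, u, hu⟩ := hmem
  have hlen : w.length = m + 4 := by rw [hpw.length_eq]; simp
  have hul : u.length = m + 2 := by
    have h := congrArg List.length hu
    simp only [List.length_append, List.length_cons, List.length_nil, hlen] at h
    omega
  have hnd : w.Nodup := hpw.nodup_iff.2 (nodup_full m)
  have B : ∀ i, i < m + 4 → 1 ≤ w.getD i 0 ∧ w.getD i 0 ≤ m + 4 := by
    intro i hi
    exact mem_full.1 (hpw.mem_iff.1 (getD_mem (by omega)))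
  have uniq : ∀ i j, i < m + 4 → j < m + 4 → w.getD i 0 = w.getD j 0 → i = j := by
    intro i j hi hj hij
    have hiw : i < w.length := by omega
    have hjw : j < w.length := by omega
    rw [List.getD_eq_getElem _ _ hiw, List.getD_eq_getElem _ _ hjw] at hij
    have h1 := List.Nodup.idxOf_getElem hnd i hiw
    rw [hij, List.Nodup.idxOf_getElem hnd j hjw] at h1
    omega
  have e5 : w.getD (m+2) 0 = 2 := by
    rw [hu, List.getD_append_right _ _ _ _ (by omega),
      show m + 2 - u.length = 0 from by omega, List.getD_cons_zero]
  have e6 : w.getD (m+3) 0 = m + 3 := by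
    rw [hu, List.getD_append_right _ _ _ _ (by omega),
      show m + 3 - u.length = 0 + 1 from by omega, List.getD_cons_succ, List.getD_cons_zero]
  have h1w : (1:ℕ) ∈ w := hpw.mem_iff.2 (mem_full.2 ⟨by omega, by omega⟩)
  have hnw : (m+4) ∈ w := hpw.mem_iff.2 (mem_full.2 ⟨by omega, by omega⟩)
  have hqw : w.idxOf 1 < w.length := List.idxOf_lt_length_iff.2 h1w
  have hpw2 : w.idxOf (m+4) < w.length := List.idxOf_lt_length_iff.2 hnw
  set q := w.idxOf 1 with hqdef
  set p := w.idxOf (m+4) with hpdef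
  have eq1 : w.getD q 0 = 1 := by
    rw [List.getD_eq_getElem _ _ hqw]; exact List.getElem_idxOf hqw
  have eqp : w.getD p 0 = m + 4 := by
    rw [List.getD_eq_getElem _ _ hpw2]; exact List.getElem_idxOf hpw2
  clear_value q p
  have i2 : w.idxOf 2 = m + 2 := by
    have h2' : m + 2 < w.length := by omega
    have hx := List.Nodup.idxOf_getElem hnd (m+2) h2'
    rw [← List.getD_eq_getElem w 0 h2', e5] at hx
    exact hx
  have hpm : p < m + 2 := by rw [← i2]; exact hn2
  have hqp : q < p := h1n
  -- ascents force position p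
  have A : ∀ a, a + 1 < m + 3 → w.getD a 0 < w.getD (a+1) 0 → a + 1 = p := by
    intro a ha hasc
    have key : ¬ (w.getD (a+1) 0 < m + 3) := by
      intro hk
      exact h123 ⟨a, m+3, by omega, by omega, hasc, by rw [e6]; exact hk⟩
    have hb := B (a+1) (by omega)
    have hne3 : w.getD (a+1) 0 ≠ m + 3 := by
      intro h
      have := uniq (a+1) (m+3) (by omega) (by omega) (by rw [h, e6])
      omega
    have h4 : w.getD (a+1) 0 = m + 4 := by omega
    exact uniq (a+1) p (by omega) (by omega) (by rw [h4, eqp])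
  have hpq : p = q + 1 := by
    have hne1 : w.getD (q+1) 0 ≠ 1 := by
      intro h
      have := uniq (q+1) q (by omega) (by omega) (by rw [h, eq1])
      omega
    have hb := B (q+1) (by omega)
    have hasc : w.getD q 0 < w.getD (q+1) 0 := by rw [eq1]; omega
    have := A q (by omega) hasc
    omega
  have D : ∀ a, a + 1 < m + 3 → a + 1 ≠ p → w.getD (a+1) 0 < w.getD a 0 := by
    intro a ha hne'
    rcases Nat.lt_trichotomy (w.getD a 0) (w.getD (a+1) 0) with h | h | h
    · exact absurd (A a ha h) hne'
    · exact absurd (uniq a (a+1) (by omega) (by omega) h) (by omega)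
    · exact h
  have hqm : q ≤ m := by omega
  have hα'len : (w.take q).length = q := by rw [List.length_take]; omega
  have hβ'len : ((w.drop (q+2)).take (m-q)).length = m - q := by
    rw [List.length_take, List.length_drop]; omega
  have gα : ∀ i, i < q → (w.take q).getD i 0 = w.getD i 0 := by
    intro i hi
    rw [List.getD_eq_getElem _ _ (by rw [hα'len]; omega),
      List.getD_eq_getElem _ _ (show i < w.length from by omega), List.getElem_take]
  have gβ : ∀ j, j < m - q → ((w.drop (q+2)).take (m-q)).getD j 0 = w.getD (q+2+j) 0 := by
    intro j hj
    rw [List.getD_eq_getElem _ _ (by rw [hβ'len]; omega),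
      List.getD_eq_getElem _ _ (show q+2+j < w.length from by omega),
      List.getElem_take, List.getElem_drop]
  have sα : List.Pairwise (· > ·) (w.take q) := by
    apply sorted_of_getD
    intro i hi
    rw [hα'len] at hi
    rw [gα i (by omega), gα (i+1) (by omega)]
    exact D i (by omega) (by omega)
  have sβ : List.Pairwise (· > ·) ((w.drop (q+2)).take (m-q)) := by
    apply sorted_of_getD
    intro j hj
    rw [hβ'len] at hj
    rw [gβ j (by omega), gβ (j+1) (by omega),
      show q+2+(j+1) = (q+2+j)+1 from by omega]
    exact D (q+2+j) (by omega) (by omega)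
  -- reassembling w
  have d3 : w.drop (m+2) = [2, m+3] := by
    rw [hu, ← hul, List.drop_left]
  have d2 : w.drop (q+1+1) = (w.drop (q+2)).take (m-q) ++ [2, m+3] := by
    rw [show q+1+1 = q+2 from by omega]
    conv_lhs => rw [← List.take_append_drop (m-q) (w.drop (q+2))]
    rw [List.drop_drop, show q+2+(m-q) = m+2 from by omega, d3]
  have v1 : w[q]'(by omega) = 1 := by
    rw [← List.getD_eq_getElem w 0 (by omega)]; exact eq1
  have v2 : w[q+1]'(by omega) = m + 4 := by
    rw [← List.getD_eq_getElem w 0 (by omega), ← hpq]; exact eqp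
  have s1 : w.drop q = w[q]'(by omega) :: w.drop (q+1) :=
    List.drop_eq_getElem_cons (by omega)
  have s2 : w.drop (q+1) = w[q+1]'(by omega) :: w.drop (q+1+1) :=
    List.drop_eq_getElem_cons (by omega)
  have t2 : w.drop (q+1) = (m+4) :: ((w.drop (q+2)).take (m-q) ++ [2, m+3]) :=
    s2.trans (congr (congrArg List.cons v2) d2)
  have d1 : w.drop q = 1 :: (m+4) :: ((w.drop (q+2)).take (m-q) ++ [2, m+3]) :=
    s1.trans (congr (congrArg List.cons v1) t2)
  have weq : w = w.take q ++ 1 :: (m+4) :: ((w.drop (q+2)).take (m-q) ++ [2, m+3]) :=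
    (List.take_append_drop q w).symm.trans (congrArg (fun t => w.take q ++ t) d1)
  have hperm2 : (w.take q ++ (w.drop (q+2)).take (m-q)).Perm (midL m) := by
    rw [List.perm_iff_count]
    intro a
    have hc := List.perm_iff_count.1 hpw a
    rw [fullL, weq] at hc
    simp only [List.count_append, List.count_cons, List.count_nil] at hc ⊢
    split_ifs at hc ⊢ <;> omega
  exact ⟨w.take q, (w.drop (q+2)).take (m-q), sα, sβ, hperm2, weq⟩

end Stmt6Aux
namespace Stmt6Aux

/-- the decreasing enumeration of a finite set. -/
def descL (s : Finset ℕ) : List ℕ := (s.sort (· ≤ ·)).reverse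

lemma descL_sorted (s : Finset ℕ) : List.Pairwise (· > ·) (descL s) := by
  have h := (Finset.sortedLT_sort s).pairwise
  rw [descL, List.pairwise_reverse]
  exact h

lemma descL_nodup (s : Finset ℕ) : (descL s).Nodup := by
  rw [descL, List.nodup_reverse]; exact s.sort_nodup _

lemma descL_toFinset (s : Finset ℕ) : (descL s).toFinset = s := by
  rw [descL, List.toFinset_reverse]; exact Finset.sort_toFinset s _

lemma descL_mem {s : Finset ℕ} {x : ℕ} : x ∈ descL s ↔ x ∈ s := by
  rw [descL, List.mem_reverse, Finset.mem_sort]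

lemma eq_descL {l : List ℕ} (h : List.Pairwise (· > ·) l) : l = descL l.toFinset := by
  haveI : IsAntisymm ℕ (· > ·) := ⟨fun a b h1 h2 => by omega⟩
  have hnd : l.Nodup := h.imp (fun {a b} hab => by omega)
  exact List.Perm.eq_of_pairwise' h (descL_sorted _)
    (List.perm_of_nodup_nodup_toFinset_eq hnd (descL_nodup _) (descL_toFinset _).symm)

lemma takeWhile_append_cons (p : ℕ → Bool) :
    ∀ (l : List ℕ) (a : ℕ) (r : List ℕ), (∀ x ∈ l, p x = true) → p a = false →
      ((l ++ a :: r).takeWhile p) = l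
  | [], a, r, _, ha => by simp [List.takeWhile_cons, ha]
  | (y :: l), a, r, h, ha => by
    rw [List.cons_append, List.takeWhile_cons, if_pos (h y (by simp)),
      takeWhile_append_cons p l a r (fun x hx => h x (by simp [hx])) ha]

/-- the word associated to a subset `s` of `{3,…,m+2}`. -/
def gWord (m : ℕ) (s : Finset ℕ) : List ℕ :=
  descL s ++ 1 :: (m+4) :: (descL ((midL m).toFinset \ s) ++ [2, m+3])

lemma gWord_injOn (m : ℕ) : Set.InjOn (gWord m) ↑((midL m).toFinset.powerset) := by
  intro s hs s' hs' h
  have key : ∀ t : Finset ℕ, t ∈ (midL m).toFinset.powerset →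
      (gWord m t).takeWhile (fun x => decide (x ≠ 1)) = descL t := by
    intro t ht
    apply takeWhile_append_cons
    · intro x hx
      have hxt : x ∈ t := descL_mem.1 hx
      have hxm : x ∈ midL m := List.mem_toFinset.1 (Finset.mem_powerset.1 ht hxt)
      have := mem_midL.1 hxm
      simp only [decide_eq_true_eq]
      omega
    · simp
  have h2 : descL s = descL s' := by
    rw [← key s (Finset.mem_coe.1 hs), ← key s' (Finset.mem_coe.1 hs'), h]
  have h3 := congrArg List.toFinset h2
  rwa [descL_toFinset, descL_toFinset] at h3

lemma set_eq_image (m : ℕ) :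
    {w : List ℕ | ∃ α β : List ℕ, List.Pairwise (· > ·) α ∧ List.Pairwise (· > ·) β ∧
        (α ++ β).Perm (midL m) ∧ w = α ++ 1 :: (m+4) :: (β ++ [2, m+3])} =
      ↑(((midL m).toFinset.powerset).image (gWord m)) := by
  ext w
  simp only [Set.mem_setOf_eq, Finset.coe_image, Set.mem_image, Finset.mem_coe,
    Finset.mem_powerset]
  constructor
  · rintro ⟨α, β, hα, hβ, hp, rfl⟩
    have hndαβ : (α ++ β).Nodup := hp.nodup_iff.2 (nodup_midL m)
    rw [List.nodup_append'] at hndαβ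
    obtain ⟨hndα, hndβ, hdisj⟩ := hndαβ
    refine ⟨α.toFinset, ?_, ?_⟩
    · intro x hx
      rw [List.mem_toFinset] at hx
      rw [List.mem_toFinset]
      exact hp.mem_iff.1 (List.mem_append.2 (Or.inl hx))
    · have hβT : (midL m).toFinset \ α.toFinset = β.toFinset := by
        ext x
        simp only [Finset.mem_sdiff, List.mem_toFinset]
        constructor
        · rintro ⟨hx1, hx2⟩
          rcases List.mem_append.1 (hp.mem_iff.2 hx1) with h | h
          · exact absurd h hx2
          · exact h
        · intro hx
          exact ⟨hp.mem_iff.1 (List.mem_append.2 (Or.inr hx)), fun hc => hdisj hc hx⟩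
      rw [gWord, hβT, ← eq_descL hα, ← eq_descL hβ]
  · rintro ⟨s, hs, rfl⟩
    refine ⟨descL s, descL ((midL m).toFinset \ s), descL_sorted _, descL_sorted _, ?_, rfl⟩
    have hnd : (descL s ++ descL ((midL m).toFinset \ s)).Nodup := by
      rw [List.nodup_append']
      refine ⟨descL_nodup _, descL_nodup _, fun x hx hx' => ?_⟩
      rw [descL_mem] at hx hx'
      exact (Finset.mem_sdiff.1 hx').2 hx
    apply List.perm_of_nodup_nodup_toFinset_eq hnd (nodup_midL m)
    rw [List.toFinset_append, descL_toFinset, descL_toFinset,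
      Finset.union_sdiff_of_subset hs]

end Stmt6Aux

open Stmt6Aux in
theorem stmt6 (n : ℕ) (hn : 4 ≤ n) :
    ccount n 2 (n - 1) = 2 ^ (n - 4) ∧
    Cnij n 2 (n - 1) =
      {w | ∃ α β : List ℕ, List.Pairwise (· > ·) α ∧ List.Pairwise (· > ·) β ∧
        (α ++ β).Perm ((List.range (n - 4)).map (· + 3)) ∧
        w = α ++ 1 :: n :: (β ++ [2, n - 1])} := by
  obtain ⟨m, rfl⟩ : ∃ m, n = m + 4 := ⟨n - 4, by omega⟩
  rw [show m + 4 - 1 = m + 3 from by omega, show m + 4 - 4 = m from by omega]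
  have hset : Cnij (m+4) 2 (m+3) =
      {w : List ℕ | ∃ α β : List ℕ, List.Pairwise (· > ·) α ∧ List.Pairwise (· > ·) β ∧
        (α ++ β).Perm (midL m) ∧ w = α ++ 1 :: (m+4) :: (β ++ [2, m+3])} := by
    ext w
    constructor
    · intro hw
      exact struct m w hw
    · rintro ⟨α, β, hα, hβ, hp, rfl⟩
      exact mem_C m α β hα hβ hp
  constructor
  · show (Cnij (m+4) 2 (m+3)).ncard = 2 ^ m
    rw [hset, set_eq_image, Set.ncard_coe_finset,
      Finset.card_image_of_injOn (gWord_injOn m), Finset.card_powerset,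
      List.toFinset_card_of_nodup (nodup_midL m), length_midL]
  · exact hset
end

section
/- For n ≥ 5 and 3 ≤ i < j ≤ n−1, c(n,i,j) = 0: a member of C_n cannot end in an ascent i, j with i ≥ 3, since the subsequence n, 2, i, j would form an occurrence of 41\overline{23}. -/
open List

theorem stmt7 (n i j : ℕ) (hn : 5 ≤ n) (hi : 3 ≤ i) (hij : i < j) (hj : j ≤ n - 1) :
    ccount n i j = 0 := by
  have hC : Cnij n i j = ∅ := by
    ext w
    simp only [Cnij, Cset, Lstar, Lset, Set.mem_setOf_eq, Set.mem_diff,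
      Set.mem_empty_iff_false, iff_false, not_and]
    rintro ⟨⟨⟨hperm, h123, h4123⟩, hex⟩, h1n, hn2⟩ ⟨u, rfl⟩
    set L := u ++ [i, j] with hL
    have hlen : L.length = n := by
      have := hperm.length_eq
      simpa using this
    have hlen2 : L.length = u.length + 2 := by simp [hL]
    -- membership of n and 2
    have hnmem : n ∈ L := by
      rw [hperm.mem_iff]
      simp only [List.mem_map, List.mem_range]
      exact ⟨n - 1, by omega, by omega⟩
    have h2mem : (2 : ℕ) ∈ L := by
      rw [hperm.mem_iff]
      simp only [List.mem_map, List.mem_range]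
      exact ⟨1, by omega, by omega⟩
    have han : L.idxOf n < L.length := List.idxOf_lt_length_iff.2 hnmem
    have hb2 : L.idxOf 2 < L.length := List.idxOf_lt_length_iff.2 h2mem
    have hgan : L.getD (L.idxOf n) 0 = n := by
      rw [List.getD_eq_getElem L 0 han]
      exact List.getElem_idxOf han
    have hgb2 : L.getD (L.idxOf 2) 0 = 2 := by
      rw [List.getD_eq_getElem L 0 hb2]
      exact List.getElem_idxOf hb2
    have hgc : L.getD u.length 0 = i := by
      rw [List.getD_eq_getElem L 0 (by omega)]
      exact (List.getElem_append_right (le_refl u.length)).trans (by simp)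
    have hgc1 : L.getD (u.length + 1) 0 = j := by
      rw [List.getD_eq_getElem L 0 (by omega)]
      exact (List.getElem_append_right (by omega : u.length ≤ u.length + 1)).trans (by simp)
    have hb2lt : L.idxOf 2 < u.length := by
      rcases (by omega : L.idxOf 2 < u.length ∨ L.idxOf 2 = u.length ∨ L.idxOf 2 = u.length + 1) with h | h | h
      · exact h
      · rw [h, hgc] at hgb2; omega
      · rw [h, hgc1] at hgb2; omega
    exact h4123 ⟨L.idxOf n, L.idxOf 2, u.length, hn2, hb2lt, by omega,
      by rw [hgb2, hgc]; omega, by rw [hgc, hgc1]; omega, by rw [hgc1, hgan]; omega⟩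
  simp [ccount, hC]
end

section
/- For n ≥ 2, v(n,1) = Σ_{i=1}^{n−1} v(n−1, i); indeed, deleting the final letter 1 gives a bijection from the set of permutations of [n] avoiding {1̄2̄3, 1\overline{23}} that end in 1 onto the set of all permutations of [n−1] avoiding {1̄2̄3, 1\overline{23}}. -/
open List

lemma mem_oneToN {m x : ℕ} : x ∈ (List.range m).map (· + 1) ↔ 1 ≤ x ∧ x ≤ m := by
  simp only [List.mem_map, List.mem_range]
  constructor
  · rintro ⟨k, hk, rfl⟩; omega
  · rintro ⟨h1, h2⟩; exact ⟨x - 1, by omega, by omega⟩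

lemma getD_gl_lt (v : List ℕ) (i : ℕ) (h : i < v.length) :
    (v.map (· + 1) ++ [1]).getD i 0 = v.getD i 0 + 1 := by
  rw [List.getD_append _ _ _ _ (by simpa using h),
    List.getD_eq_getElem _ _ (by simpa using h), List.getD_eq_getElem _ _ h]
  simp

lemma getD_gl_eq (v : List ℕ) :
    (v.map (· + 1) ++ [1]).getD v.length 0 = 1 := by
  rw [List.getD_append_right _ _ _ _ (by simp)]
  simp

lemma occ123_gl (v : List ℕ) : Occ123 (v.map (· + 1) ++ [1]) ↔ Occ123 v := by
  constructor
  · rintro ⟨a, c, h1, h2, h3, h4⟩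
    simp only [List.length_append, List.length_map, List.length_cons, List.length_nil] at h2
    rcases Nat.lt_or_ge c v.length with hc | hc
    · have ha1 : a + 1 < v.length := by omega
      have ha : a < v.length := by omega
      rw [getD_gl_lt _ _ ha, getD_gl_lt _ _ ha1] at h3
      rw [getD_gl_lt _ _ ha1, getD_gl_lt _ _ hc] at h4
      exact ⟨a, c, h1, hc, by omega, by omega⟩
    · have hce : c = v.length := by omega
      subst hce
      rw [getD_gl_eq, getD_gl_lt _ _ (by omega)] at h4
      omega
  · rintro ⟨a, c, h1, h2, h3, h4⟩
    refine ⟨a, c, h1, by simp; omega, ?_, ?_⟩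
    · rw [getD_gl_lt _ _ (by omega), getD_gl_lt _ _ (by omega)]; omega
    · rw [getD_gl_lt _ _ (by omega), getD_gl_lt _ _ h2]; omega

lemma occ1_23_gl (v : List ℕ) : Occ1_23 (v.map (· + 1) ++ [1]) ↔ Occ1_23 v := by
  constructor
  · rintro ⟨a, b, h1, h2, h3, h4⟩
    simp only [List.length_append, List.length_map, List.length_cons, List.length_nil] at h2
    rcases Nat.lt_or_ge (b + 1) v.length with hb | hb
    · rw [getD_gl_lt _ _ (by omega), getD_gl_lt _ _ (by omega)] at h3
      rw [getD_gl_lt _ _ (by omega), getD_gl_lt _ _ hb] at h4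
      exact ⟨a, b, h1, hb, by omega, by omega⟩
    · have hbe : b + 1 = v.length := by omega
      rw [getD_gl_lt _ _ (by omega), hbe, getD_gl_eq] at h4
      omega
  · rintro ⟨a, b, h1, h2, h3, h4⟩
    refine ⟨a, b, h1, by simp; omega, ?_, ?_⟩
    · rw [getD_gl_lt _ _ (by omega), getD_gl_lt _ _ (by omega)]; omega
    · rw [getD_gl_lt _ _ (by omega), getD_gl_lt _ _ h2]; omega

lemma map_succ_pred (v : List ℕ) : (v.map (· + 1)).map (· - 1) = v := by
  rw [List.map_map]
  conv_rhs => rw [← List.map_id v]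
  exact List.map_congr_left fun x _ => by simp

lemma map_pred_succ {u : List ℕ} (h : ∀ x ∈ u, 1 ≤ x) :
    (u.map (· - 1)).map (· + 1) = u := by
  rw [List.map_map]
  conv_rhs => rw [← List.map_id u]
  exact List.map_congr_left fun x hx => by have := h x hx; simp; omega

lemma perm_gl (v : List ℕ) (m : ℕ) :
    IsPermOf (m + 1) (v.map (· + 1) ++ [1]) ↔ IsPermOf m v := by
  unfold IsPermOf
  have hr : (List.range (m + 1)).map (· + 1)
      = 1 :: ((List.range m).map (· + 1)).map (· + 1) := by
    rw [List.range_succ_eq_map]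
    simp [List.map_map, Function.comp]
  rw [hr]
  constructor
  · intro h
    have h2 : (1 :: v.map (· + 1)).Perm (1 :: ((List.range m).map (· + 1)).map (· + 1)) :=
      (List.perm_append_singleton 1 (v.map (· + 1))).symm.trans h
    have h3 := (h2.cons_inv).map (· - 1)
    rwa [map_succ_pred, map_succ_pred] at h3
  · intro h
    exact (List.perm_append_singleton 1 (v.map (· + 1))).trans ((h.map (· + 1)).cons 1)

lemma vset_gl (m : ℕ) (v : List ℕ) :
    v.map (· + 1) ++ [1] ∈ Vset (m + 1) ↔ v ∈ Vset m := by
  unfold Vset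
  simp only [Set.mem_setOf_eq, perm_gl, occ123_gl, occ1_23_gl]

lemma vset_pos {n : ℕ} {w : List ℕ} (h : w ∈ Vset n) : ∀ x ∈ w, 1 ≤ x := by
  intro x hx
  exact (mem_oneToN.1 (h.1.mem_iff.1 hx)).1

lemma vset_len {n : ℕ} {w : List ℕ} (h : w ∈ Vset n) : w.length = n := by
  have := h.1.length_eq
  simpa using this

lemma vset_finite (n : ℕ) : (Vset n).Finite := by
  apply (List.finite_toSet ((List.range n).map (· + 1)).permutations).subset
  intro w hw
  exact List.mem_permutations.2 hw.1

theorem stmt11 (n : ℕ) (hn : 2 ≤ n) :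
    vcount n 1 = ∑ i ∈ Finset.Icc 1 (n - 1), vcount (n - 1) i ∧
    Set.BijOn (fun w : List ℕ => w.dropLast.map (· - 1))
      {w ∈ Vset n | ∃ u, w = u ++ [1]} (Vset (n - 1)) := by
  obtain ⟨m, rfl⟩ : ∃ m, n = m + 1 := ⟨n - 1, by omega⟩
  have hm : 1 ≤ m := by omega
  simp only [Nat.add_sub_cancel]
  set S : Set (List ℕ) := {w ∈ Vset (m + 1) | ∃ u, w = u ++ [1]} with hS
  set f : List ℕ → List ℕ := fun w => w.dropLast.map (· - 1) with hf
  set g : List ℕ → List ℕ := fun v => v.map (· + 1) ++ [1] with hg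
  have hgf : ∀ w ∈ S, g (f w) = w := by
    rintro w ⟨hw, u, rfl⟩
    have hpos : ∀ x ∈ u, 1 ≤ x := fun x hx => vset_pos hw x (by simp [hx])
    simp only [hg, hf, List.dropLast_concat]
    rw [map_pred_succ hpos]
  have hfg : ∀ v : List ℕ, f (g v) = v := by
    intro v
    simp only [hg, hf, List.dropLast_concat, map_succ_pred]
  have hmem : ∀ v : List ℕ, g v ∈ S ↔ v ∈ Vset m := by
    intro v
    constructor
    · rintro ⟨hv, -⟩; exact (vset_gl m v).1 hv
    · intro hv; exact ⟨(vset_gl m v).2 hv, v.map (· + 1), rfl⟩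
  have hbij : Set.BijOn f S (Vset m) := by
    refine ⟨?_, ?_, ?_⟩
    · intro w hw
      have : g (f w) ∈ S := by rw [hgf w hw]; exact hw
      exact (hmem (f w)).1 this
    · intro w1 h1 w2 h2 he
      rw [← hgf w1 h1, ← hgf w2 h2, he]
    · intro v hv
      exact ⟨g v, (hmem v).2 hv, hfg v⟩
  refine ⟨?_, hbij⟩
  have h1 : vcount (m + 1) 1 = (Vset m).ncard := by
    rw [show (Vset m) = f '' S from hbij.image_eq.symm,
      Set.ncard_image_of_injOn hbij.injOn]
    rfl
  have hfin := vset_finite m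
  set T := hfin.toFinset with hT
  have hTmem : ∀ w, w ∈ T ↔ w ∈ Vset m := fun w => hfin.mem_toFinset
  have hlast : ∀ w ∈ Vset m, w.getLastD 0 ∈ Finset.Icc 1 m := by
    intro w hw
    have hne : w ≠ [] := by
      intro h
      have := vset_len hw
      rw [h] at this
      simp at this
      omega
    have hmem' : w.getLast hne ∈ w := List.getLast_mem hne
    have hb := mem_oneToN.1 (hw.1.mem_iff.1 hmem')
    have hgl : w.getLastD 0 = w.getLast hne := by
      rw [List.getLastD_eq_getLast?, List.getLast?_eq_getLast hne]
      rfl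
    rw [hgl]
    exact Finset.mem_Icc.2 hb
  have hsum : T.card = ∑ i ∈ Finset.Icc 1 m, (T.filter (fun w => w.getLastD 0 = i)).card :=
    Finset.card_eq_sum_card_fiberwise (fun w hw => hlast w ((hTmem w).1 hw))
  have hv : ∀ i ∈ Finset.Icc 1 m, vcount m i = (T.filter (fun w => w.getLastD 0 = i)).card := by
    intro i hi
    rw [Finset.mem_Icc] at hi
    rw [vcount, ← Set.ncard_coe_finset]
    congr 1
    ext w
    simp only [Finset.coe_filter, Set.mem_setOf_eq, hTmem]
    constructor
    · rintro ⟨hw, u, rfl⟩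
      exact ⟨hw, List.getLastD_concat⟩
    · rintro ⟨hw, hl⟩
      have hne : w ≠ [] := by
        intro h
        rw [h] at hl
        simp at hl
        omega
      have hgi : w.getLast hne = i := by
        rw [← hl, List.getLastD_eq_getLast?, List.getLast?_eq_getLast hne]
        rfl
      refine ⟨hw, w.dropLast, ?_⟩
      rw [← hgi]
      exact (List.dropLast_append_getLast hne).symm
  rw [h1, Set.ncard_eq_toFinset_card _ hfin, hsum]
  exact Finset.sum_congr rfl (fun i hi => (hv i hi).symm)
end

section
/- Let n ≥ 5, 3 ≤ j ≤ n−2, and let ρ = α 1 n β γ 2 j be a word on [n] where β is nonempty with last letter k satisfying j+1 ≤ k ≤ n−1, and γ consists of letters in {3,…,j−1}. Then ρ avoids both 1̄2̄3 and 41\overline{23} if and only if: (i) α and γ are decreasing, (ii) every letter of α lies in {3,…,j−1}, and (iii) β avoids both vincular patterns 1̄2̄3 and 1\overline{23}. -/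
open List

theorem stmt14 (n j k : ℕ) (hn : 5 ≤ n) (hj3 : 3 ≤ j) (hj : j ≤ n - 2)
    (α β γ ρ : List ℕ)
    (hρ : ρ = α ++ 1 :: n :: (β ++ γ ++ [2, j]))
    (hperm : IsPermOf n ρ)
    (hβne : β ≠ []) (hk : β.getLast? = some k) (hk1 : j + 1 ≤ k) (hk2 : k ≤ n - 1)
    (hγ : ∀ x ∈ γ, 3 ≤ x ∧ x ≤ j - 1) :
    (¬ Occ123 ρ ∧ ¬ Occ4123 ρ) ↔
      (List.Pairwise (· > ·) α ∧ List.Pairwise (· > ·) γ ∧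
       (∀ x ∈ α, 3 ≤ x ∧ x ≤ j - 1) ∧
       ¬ Occ123 β ∧ ¬ Occ1_23 β) := by
  haveI : IsTrans ℕ (· > ·) := ⟨fun _ _ _ h1 h2 => lt_trans h2 h1⟩
  have hlen : ρ.length = α.length + 2 + β.length + γ.length + 2 := by
    rw [hρ]; simp [List.length_append]; omega
  have g1 : ∀ i, i < α.length → ρ.getD i 0 = α.getD i 0 := by
    intro i hi; rw [hρ]; exact List.getD_append _ _ _ _ hi
  have g2 : ρ.getD α.length 0 = 1 := by
    rw [hρ, List.getD_append_right _ _ _ _ le_rfl, Nat.sub_self]; rfl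
  have g3 : ρ.getD (α.length + 1) 0 = n := by
    rw [hρ, List.getD_append_right _ _ _ _ (by omega),
      show α.length + 1 - α.length = 1 by omega]; rfl
  have g4 : ∀ i, i < β.length → ρ.getD (α.length + 2 + i) 0 = β.getD i 0 := by
    intro i hi
    rw [hρ, List.getD_append_right _ _ _ _ (by omega),
      show α.length + 2 + i - α.length = i + 2 by omega]
    show (β ++ γ ++ [2, j]).getD i 0 = β.getD i 0
    rw [List.getD_append _ _ _ _ (by rw [List.length_append]; omega)]
    exact List.getD_append _ _ _ _ hi
  have g5 : ∀ i, i < γ.length → ρ.getD (α.length + 2 + β.length + i) 0 = γ.getD i 0 := by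
    intro i hi
    rw [hρ, List.getD_append_right _ _ _ _ (by omega),
      show α.length + 2 + β.length + i - α.length = β.length + i + 2 by omega]
    show (β ++ γ ++ [2, j]).getD (β.length + i) 0 = γ.getD i 0
    rw [List.getD_append _ _ _ _ (by rw [List.length_append]; omega),
      List.getD_append_right _ _ _ _ (by omega),
      show β.length + i - β.length = i by omega]
  have hbg : (β ++ γ).length = β.length + γ.length := List.length_append
  have g6 : ρ.getD (α.length + 2 + β.length + γ.length) 0 = 2 := by
    rw [hρ, List.getD_append_right _ _ _ _ (by omega),
      show α.length + 2 + β.length + γ.length - α.length = β.length + γ.length + 2 by omega]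
    show (β ++ γ ++ [2, j]).getD (β.length + γ.length) 0 = 2
    rw [List.getD_append_right _ _ _ _ (le_of_eq hbg), hbg, Nat.sub_self]; rfl
  have g7 : ρ.getD (α.length + 2 + β.length + γ.length + 1) 0 = j := by
    rw [hρ, List.getD_append_right _ _ _ _ (by omega),
      show α.length + 2 + β.length + γ.length + 1 - α.length = β.length + γ.length + 1 + 2 by
        omega]
    show (β ++ γ ++ [2, j]).getD (β.length + γ.length + 1) 0 = j
    rw [List.getD_append_right _ _ _ _ (by omega), hbg,
      show β.length + γ.length + 1 - (β.length + γ.length) = 1 by omega]; rfl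
  have ndr : ρ.Nodup :=
    (List.Perm.nodup_iff hperm).mpr (List.Nodup.map (add_left_injective 1) (List.nodup_range))
  have inj : ∀ a b, a < ρ.length → b < ρ.length → ρ.getD a 0 = ρ.getD b 0 → a = b := by
    intro a b ha hb h
    rw [ρ.getD_eq_getElem 0 ha, ρ.getD_eq_getElem 0 hb] at h
    exact (ndr.getElem_inj_iff).mp h
  have vne : ∀ a b, a < ρ.length → b < ρ.length → a ≠ b → ρ.getD a 0 ≠ ρ.getD b 0 :=
    fun a b ha hb hab h => hab (inj a b ha hb h)
  have bound : ∀ a, a < ρ.length → 1 ≤ ρ.getD a 0 ∧ ρ.getD a 0 ≤ n := by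
    intro a ha
    have hm : ρ.getD a 0 ∈ ρ := by rw [ρ.getD_eq_getElem 0 ha]; exact List.getElem_mem ha
    have h2 := (List.Perm.mem_iff hperm).mp hm
    simp only [List.mem_map, List.mem_range] at h2
    obtain ⟨y, hy, hye⟩ := h2; omega
  have hBpos : 0 < β.length := List.length_pos_iff.mpr hβne
  have kval : β.getD (β.length - 1) 0 = k := by
    rw [List.getLast?_eq_getLast hβne] at hk
    have h2 := Option.some.inj hk
    rw [List.getLast_eq_getElem hβne] at h2
    rw [List.getD_eq_getElem _ _ (by omega)]
    exact h2
  constructor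
  · rintro ⟨h123, h4123⟩
    have hα : ∀ x ∈ α, 3 ≤ x ∧ x ≤ j - 1 := by
      intro x hx
      obtain ⟨a, ha, rfl⟩ := List.mem_iff_getElem.mp hx
      have hge : ρ.getD a 0 = α[a] := by rw [g1 a ha, List.getD_eq_getElem _ _ ha]
      have hb := bound a (by omega)
      have h1 : ρ.getD a 0 ≠ 1 := by
        have := vne a α.length (by omega) (by omega) (by omega); rwa [g2] at this
      have h2 : ρ.getD a 0 ≠ 2 := by
        have := vne a (α.length + 2 + β.length + γ.length) (by omega) (by omega) (by omega)
        rwa [g6] at this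
      have h3 : ρ.getD a 0 ≠ j := by
        have := vne a (α.length + 2 + β.length + γ.length + 1) (by omega) (by omega) (by omega)
        rwa [g7] at this
      have h4 : ¬ j < ρ.getD a 0 := by
        intro hlt
        exact h4123 ⟨a, α.length, α.length + 2 + β.length + γ.length, by omega, by omega,
          by omega, by rw [g2, g6]; omega, by rw [g6, g7]; omega, by rw [g7]; omega⟩
      omega
    have hchainα : List.IsChain (· > ·) α := by
      rw [List.isChain_iff_getElem]
      intro i hi
      have hi1 : i + 1 < α.length := by omega
      by_contra hcon
      push_neg at hcon
      have e1 : ρ.getD i 0 = α[i] := by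
        rw [g1 i (by omega), List.getD_eq_getElem _ _ (by omega)]
      have e2 : ρ.getD (i + 1) 0 = α[i + 1] := by
        rw [g1 (i + 1) hi1, List.getD_eq_getElem _ _ hi1]
      have hne := vne i (i + 1) (by omega) (by omega) (by omega)
      have hnen : ρ.getD (i + 1) 0 ≠ n := by
        have := vne (i + 1) (α.length + 1) (by omega) (by omega) (by omega); rwa [g3] at this
      have hbnd := bound (i + 1) (by omega)
      exact h123 ⟨i, α.length + 1, by omega, by omega, by omega, by rw [g3]; omega⟩
    have hchainγ : List.IsChain (· > ·) γ := by
      rw [List.isChain_iff_getElem]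
      intro i hi
      have hi1 : i + 1 < γ.length := by omega
      by_contra hcon
      push_neg at hcon
      have e1 : ρ.getD (α.length + 2 + β.length + i) 0 = γ[i] := by
        rw [g5 i (by omega), List.getD_eq_getElem _ _ (by omega)]
      have e2 : ρ.getD (α.length + 2 + β.length + i + 1) 0 = γ[i + 1] := by
        rw [show α.length + 2 + β.length + i + 1 = α.length + 2 + β.length + (i + 1) by omega,
          g5 (i + 1) hi1, List.getD_eq_getElem _ _ hi1]
      have hne := vne (α.length + 2 + β.length + i) (α.length + 2 + β.length + i + 1)
        (by omega) (by omega) (by omega)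
      have hbj := (hγ _ (List.getElem_mem hi1)).2
      exact h123 ⟨α.length + 2 + β.length + i, α.length + 2 + β.length + γ.length + 1,
        by omega, by omega, by omega, by rw [g7]; omega⟩
    refine ⟨List.isChain_iff_pairwise.mp hchainα, List.isChain_iff_pairwise.mp hchainγ, hα, ?_, ?_⟩
    · rintro ⟨a, c, h1, h2, h3, h4⟩
      refine h123 ⟨α.length + 2 + a, α.length + 2 + c, by omega, by omega, ?_, ?_⟩
      · rw [show α.length + 2 + a + 1 = α.length + 2 + (a + 1) by omega, g4 a (by omega),
          g4 (a + 1) (by omega)]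
        exact h3
      · rw [show α.length + 2 + a + 1 = α.length + 2 + (a + 1) by omega, g4 (a + 1) (by omega),
          g4 c h2]
        exact h4
    · rintro ⟨a, b, h1, h2, h3, h4⟩
      have hvn : ρ.getD (α.length + 2 + (b + 1)) 0 ≠ n := by
        have := vne (α.length + 2 + (b + 1)) (α.length + 1) (by omega) (by omega) (by omega)
        rwa [g3] at this
      have hbnd := bound (α.length + 2 + (b + 1)) (by omega)
      refine h4123 ⟨α.length + 1, α.length + 2 + a, α.length + 2 + b, by omega, by omega,
        by omega, ?_, ?_, ?_⟩
      · rw [g4 a (by omega), g4 b (by omega)]; exact h3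
      · rw [show α.length + 2 + b + 1 = α.length + 2 + (b + 1) by omega, g4 b (by omega),
          g4 (b + 1) h2]
        exact h4
      · rw [show α.length + 2 + b + 1 = α.length + 2 + (b + 1) by omega, g3, g4 (b + 1) h2]
        rw [g4 (b + 1) h2] at hvn
        have h5 := hbnd.2
        rw [g4 (b + 1) h2] at h5
        omega
  · rintro ⟨hsα, hsγ, hα, hb123, hb1_23⟩
    have hadjα : ∀ i, i + 1 < α.length → α.getD (i + 1) 0 < α.getD i 0 := by
      intro i h
      have h2 := (List.pairwise_iff_getElem.mp hsα) i (i + 1) (by omega) h (by omega)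
      rw [List.getD_eq_getElem _ _ (by omega : i < α.length), List.getD_eq_getElem _ _ h]
      exact h2
    have hadjγ : ∀ i, i + 1 < γ.length → γ.getD (i + 1) 0 < γ.getD i 0 := by
      intro i h
      have h2 := (List.pairwise_iff_getElem.mp hsγ) i (i + 1) (by omega) h (by omega)
      rw [List.getD_eq_getElem _ _ (by omega : i < γ.length), List.getD_eq_getElem _ _ h]
      exact h2
    have hαv : ∀ a, a < α.length → 3 ≤ ρ.getD a 0 ∧ ρ.getD a 0 ≤ j - 1 := by
      intro a ha
      rw [g1 a ha, List.getD_eq_getElem _ _ ha]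
      exact hα _ (List.getElem_mem ha)
    have hγv : ∀ i, i < γ.length → 3 ≤ γ.getD i 0 ∧ γ.getD i 0 ≤ j - 1 := by
      intro i hi
      rw [List.getD_eq_getElem _ _ hi]
      exact hγ _ (List.getElem_mem hi)
    have hkρ : ρ.getD (α.length + 2 + (β.length - 1)) 0 = k := by
      rw [g4 _ (by omega)]; exact kval
    have ascent : ∀ i, i + 1 < ρ.length → ρ.getD i 0 < ρ.getD (i + 1) 0 →
        i = α.length ∨ (∃ i', i' + 1 < β.length ∧ i = α.length + 2 + i') ∨
        i = α.length + 2 + β.length + γ.length := by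
      intro i hi hasc
      by_cases c1 : i < α.length
      · exfalso
        by_cases c2 : i + 1 < α.length
        · have h2 := hadjα i c2
          rw [g1 i c1, g1 (i + 1) c2] at hasc
          omega
        · have e : i + 1 = α.length := by omega
          have h1 : ρ.getD (i + 1) 0 = 1 := by rw [e]; exact g2
          have h2 := hαv i c1
          omega
      · by_cases c2 : i = α.length
        · exact Or.inl c2
        · by_cases c3 : i = α.length + 1
          · exfalso
            have h1 : ρ.getD i 0 = n := by rw [c3]; exact g3
            have h2 := bound (i + 1) (by omega)
            omega
          · by_cases c4 : i < α.length + 2 + β.length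
            · have hie : i = α.length + 2 + (i - (α.length + 2)) := by omega
              by_cases c5 : i - (α.length + 2) + 1 < β.length
              · exact Or.inr (Or.inl ⟨i - (α.length + 2), c5, hie⟩)
              · exfalso
                have hik : ρ.getD i 0 = k := by
                  rw [show i = α.length + 2 + (β.length - 1) by omega]; exact hkρ
                by_cases c6 : 0 < γ.length
                · have h2 : ρ.getD (i + 1) 0 = γ.getD 0 0 := by
                    rw [show i + 1 = α.length + 2 + β.length + 0 by omega]; exact g5 0 c6
                  have h3 := hγv 0 c6
                  omega
                · have h2 : ρ.getD (i + 1) 0 = 2 := by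
                    rw [show i + 1 = α.length + 2 + β.length + γ.length by omega]; exact g6
                  omega
            · by_cases c7 : i < α.length + 2 + β.length + γ.length
              · exfalso
                obtain ⟨d, hd⟩ : ∃ d, i = α.length + 2 + β.length + d :=
                  ⟨i - (α.length + 2 + β.length), by omega⟩
                have hdG : d < γ.length := by omega
                have h1 : ρ.getD i 0 = γ.getD d 0 := by rw [hd]; exact g5 d hdG
                by_cases c8 : d + 1 < γ.length
                · have h2 : ρ.getD (i + 1) 0 = γ.getD (d + 1) 0 := by
                    rw [show i + 1 = α.length + 2 + β.length + (d + 1) by omega]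
                    exact g5 _ c8
                  have h3 := hadjγ _ c8
                  omega
                · have h2 : ρ.getD (i + 1) 0 = 2 := by
                    rw [show i + 1 = α.length + 2 + β.length + γ.length by omega]; exact g6
                  have h3 := hγv _ hdG
                  omega
              · by_cases c9 : i = α.length + 2 + β.length + γ.length
                · exact Or.inr (Or.inr c9)
                · exfalso; omega
    constructor
    · rintro ⟨a, c, hac, hcL, h1, h2⟩
      rcases ascent a (by omega) h1 with hA | ⟨a', ha', hA⟩ | hA
      · have e2 : ρ.getD (a + 1) 0 = n := by rw [hA]; exact g3
        have h3 := bound c (by omega)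
        omega
      · have e1 : ρ.getD a 0 = β.getD a' 0 := by rw [hA]; exact g4 a' (by omega)
        have e2 : ρ.getD (a + 1) 0 = β.getD (a' + 1) 0 := by
          rw [show a + 1 = α.length + 2 + (a' + 1) by omega]; exact g4 _ ha'
        by_cases hc : c < α.length + 2 + β.length
        · obtain ⟨d, hd⟩ : ∃ d, c = α.length + 2 + d := ⟨c - (α.length + 2), by omega⟩
          have hc2 : d < β.length := by omega
          have e3 : ρ.getD c 0 = β.getD d 0 := by rw [hd]; exact g4 _ hc2
          exact hb123 ⟨a', d, by omega, hc2, by omega, by omega⟩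
        · have hwc : ρ.getD c 0 ≤ j := by
            by_cases hcγ : c < α.length + 2 + β.length + γ.length
            · obtain ⟨d, hd⟩ : ∃ d, c = α.length + 2 + β.length + d :=
                ⟨c - (α.length + 2 + β.length), by omega⟩
              have hc3 : d < γ.length := by omega
              have e3 : ρ.getD c 0 = γ.getD d 0 := by rw [hd]; exact g5 _ hc3
              have h3 := hγv _ hc3
              omega
            · by_cases hc4 : c = α.length + 2 + β.length + γ.length
              · rw [hc4, g6]; omega
              · have e4 : c = α.length + 2 + β.length + γ.length + 1 := by omega
                rw [e4, g7]
          by_cases hlast : a' + 1 = β.length - 1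
          · have e5 : ρ.getD (a + 1) 0 = k := by
              rw [e2, show a' + 1 = β.length - 1 by omega]; exact kval
            omega
          · have hkk := kval
            exact hb123 ⟨a', β.length - 1, by omega, by omega, by omega, by omega⟩
      · omega
    · rintro ⟨a, b, c, hab, hbc, hcL, h1, h2, h3⟩
      rcases ascent c (by omega) h2 with hC | ⟨c', hc', hC⟩ | hC
      · have e : ρ.getD (c + 1) 0 = n := by rw [hC]; exact g3
        have h4 := bound a (by omega)
        omega
      · have e2 : ρ.getD c 0 = β.getD c' 0 := by rw [hC]; exact g4 c' (by omega)
        have e3 : ρ.getD (c + 1) 0 = β.getD (c' + 1) 0 := by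
          rw [show c + 1 = α.length + 2 + (c' + 1) by omega]; exact g4 _ hc'
        by_cases hb2 : α.length + 2 ≤ b
        · obtain ⟨d, hd⟩ : ∃ d, b = α.length + 2 + d := ⟨b - (α.length + 2), by omega⟩
          have hbB : d < β.length := by omega
          have e1 : ρ.getD b 0 = β.getD d 0 := by rw [hd]; exact g4 _ hbB
          exact hb1_23 ⟨d, c', by omega, hc', by omega, by omega⟩
        · by_cases hb3 : b = α.length + 1
          · have e1 : ρ.getD b 0 = n := by rw [hb3]; exact g3
            have h4 := bound c (by omega)
            omega
          · have haα : a < α.length := by omega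
            have hav := hαv a haα
            by_cases hlast : c' + 1 = β.length - 1
            · have e5 : ρ.getD (c + 1) 0 = k := by
                rw [e3, show c' + 1 = β.length - 1 by omega]; exact kval
              omega
            · have hkk := kval
              exact hb123 ⟨c', β.length - 1, by omega, by omega, by omega, by omega⟩
      · have e2 : ρ.getD c 0 = 2 := by rw [hC]; exact g6
        have e3 : ρ.getD (c + 1) 0 = j := by rw [hC]; exact g7
        have hb1 := bound b (by omega)
        have hbv : ρ.getD b 0 = 1 := by omega
        have hbp : b = α.length := inj b α.length (by omega) (by omega) (by rw [hbv, g2])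
        have haα : a < α.length := by omega
        have hav := hαv a haα
        omega
end
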